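/- arXiv:2512.22922 — 7 statements merged into one kernel-verified Lean document; each statement's English description precedes it below -/
import Mathlib

section
/- Consider the closed-loop multi-agent system under the adaptive protocol. If every adaptive gain ρ_i is bounded on [0,∞) (i.e., for each i there exists M_i with ρ_i(t) ≤ M_i for all t ≥ 0), then ζ_i(t) → 0 as t → ∞ for every i = 1,…,N. (Lemma 3.) -/
open Matrix Filter

namespace AdaptiveProof

variable {n m : ℕ}

lemma dot_self_nonneg (v : Fin n → ℝ) : 0 ≤ v ⬝ᵥ v := by
  unfold dotProduct
  exact Finset.sum_nonneg fun i _ => mul_self_nonneg _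

lemma two_dot_le (u w : Fin n → ℝ) : 2 * (u ⬝ᵥ w) ≤ u ⬝ᵥ u + w ⬝ᵥ w := by
  have h := dot_self_nonneg (u - w)
  simp only [sub_dotProduct, dotProduct_sub, dotProduct_comm w u] at h
  nlinarith [h]

lemma neg_two_dot_le (u w : Fin n → ℝ) : -(u ⬝ᵥ u + w ⬝ᵥ w) ≤ 2 * (u ⬝ᵥ w) := by
  have h := two_dot_le u (-w)
  simp only [dotProduct_neg, neg_dotProduct, neg_neg] at h
  linarith [h]

/-- entrywise square sum constant for a matrix -/
noncomputable def c2 (M : Matrix (Fin n) (Fin m) ℝ) : ℝ := ∑ k, ∑ l, (M k l) ^ 2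

lemma c2_nonneg (M : Matrix (Fin n) (Fin m) ℝ) : 0 ≤ c2 M :=
  Finset.sum_nonneg fun _ _ => Finset.sum_nonneg fun _ _ => sq_nonneg _

lemma q_mulVec_le (M : Matrix (Fin n) (Fin m) ℝ) (v : Fin m → ℝ) :
    (M *ᵥ v) ⬝ᵥ (M *ᵥ v) ≤ c2 M * (v ⬝ᵥ v) := by
  unfold dotProduct c2 Matrix.mulVec
  simp only [dotProduct]
  calc ∑ k, (∑ l, M k l * v l) * (∑ l, M k l * v l)
      = ∑ k, (∑ l, M k l * v l) ^ 2 := by simp [sq]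
    _ ≤ ∑ k, (∑ l, (M k l) ^ 2) * (∑ l, (v l) ^ 2) :=
        Finset.sum_le_sum fun k _ => Finset.sum_mul_sq_le_sq_mul_sq _ _ _
    _ = (∑ k, ∑ l, (M k l) ^ 2) * (∑ l, v l * v l) := by
        rw [← Finset.sum_mul]; simp [sq]

lemma q_sum_le {N : ℕ} (v : Fin N → Fin n → ℝ) :
    (∑ j, v j) ⬝ᵥ (∑ j, v j) ≤ (N : ℝ) * ∑ j, (v j ⬝ᵥ v j) := by
  unfold dotProduct
  calc ∑ k, (∑ j, v j) k * (∑ j, v j) k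
      = ∑ k, (∑ j, (1:ℝ) * v j k) ^ 2 := by simp [sq, Finset.sum_apply]
    _ ≤ ∑ k, (∑ _j : Fin N, (1:ℝ) ^ 2) * (∑ j, (v j k) ^ 2) :=
        Finset.sum_le_sum fun k _ => Finset.sum_mul_sq_le_sq_mul_sq _ _ _
    _ = (N : ℝ) * ∑ j, ∑ k, v j k * v j k := by
        simp only [Finset.sum_const, Finset.card_univ, Fintype.card_fin, one_pow,
          nsmul_eq_mul, mul_one, ← Finset.mul_sum]
        rw [Finset.sum_comm]
        simp [sq]

lemma q_smul (c : ℝ) (v : Fin n → ℝ) : (c • v) ⬝ᵥ (c • v) = c ^ 2 * (v ⬝ᵥ v) := by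
  simp [smul_dotProduct, dotProduct_smul, smul_eq_mul, sq]
  ring

lemma q_sub_le (u w : Fin n → ℝ) :
    (u - w) ⬝ᵥ (u - w) ≤ 2 * (u ⬝ᵥ u) + 2 * (w ⬝ᵥ w) := by
  have h := neg_two_dot_le u w
  simp only [sub_dotProduct, dotProduct_sub, dotProduct_comm w u]
  linarith

lemma q_add_le (u w : Fin n → ℝ) :
    (u + w) ⬝ᵥ (u + w) ≤ 2 * (u ⬝ᵥ u) + 2 * (w ⬝ᵥ w) := by
  have h := q_sub_le u (-w)
  simp only [dotProduct_neg, neg_dotProduct, neg_neg, sub_neg_eq_add] at h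
  simpa using h

lemma dot_mulVec_symm (P : Matrix (Fin n) (Fin n) ℝ) (hP : Pᵀ = P) (u v : Fin n → ℝ) :
    u ⬝ᵥ (P *ᵥ v) = v ⬝ᵥ (P *ᵥ u) := by
  rw [Matrix.dotProduct_mulVec, ← Matrix.mulVec_transpose, hP, dotProduct_comm]

lemma q_factor (M : Matrix (Fin m) (Fin n) ℝ) (v : Fin n → ℝ) :
    (M *ᵥ v) ⬝ᵥ (M *ᵥ v) = v ⬝ᵥ ((Mᵀ * M) *ᵥ v) := by
  rw [← Matrix.mulVec_mulVec, Matrix.dotProduct_mulVec v Mᵀ, Matrix.vecMul_transpose]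

lemma dot_mulVec_tr (M : Matrix (Fin n) (Fin n) ℝ) (u : Fin n → ℝ) :
    u ⬝ᵥ (M *ᵥ u) = u ⬝ᵥ (Mᵀ *ᵥ u) := by
  rw [Matrix.mulVec_transpose, Matrix.dotProduct_mulVec, dotProduct_comm]

lemma dot_mulVec_left (M : Matrix (Fin n) (Fin m) ℝ) (u : Fin n → ℝ) (w : Fin m → ℝ) :
    u ⬝ᵥ (M *ᵥ w) = (Mᵀ *ᵥ u) ⬝ᵥ w := by
  rw [Matrix.mulVec_transpose, ← Matrix.dotProduct_mulVec]

open scoped MatrixOrder in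
lemma posdef_lower {P : Matrix (Fin n) (Fin n) ℝ} (hP : P.PosDef) :
    ∃ c > 0, ∀ v : Fin n → ℝ, v ⬝ᵥ v ≤ c * (v ⬝ᵥ (P *ᵥ v)) := by
  classical
  set S := CFC.sqrt P with hSdef
  have hSS : S * S = P := CFC.sqrt_mul_sqrt_self P (Matrix.nonneg_iff_posSemidef.mpr hP.posSemidef)
  have hSt : Sᵀ = S := by
    have := (Matrix.nonneg_iff_posSemidef.mp (CFC.sqrt_nonneg P)).1
    rwa [Matrix.IsHermitian, Matrix.conjTranspose_eq_transpose_of_trivial] at this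
  have hdet : IsUnit S.det := by
    have hp : 0 < P.det := hP.det_pos
    rw [← hSS, Matrix.det_mul] at hp
    have : S.det ≠ 0 := by intro h; rw [h] at hp; simp at hp
    exact isUnit_iff_ne_zero.mpr this
  have key : ∀ v : Fin n → ℝ, v ⬝ᵥ (P *ᵥ v) = (S *ᵥ v) ⬝ᵥ (S *ᵥ v) := by
    intro v; rw [q_factor, hSt, hSS]
  refine ⟨c2 S⁻¹ + 1, by have := c2_nonneg S⁻¹; linarith, fun v => ?_⟩
  have hv : v = S⁻¹ *ᵥ (S *ᵥ v) := by
    rw [Matrix.mulVec_mulVec, Matrix.nonsing_inv_mul _ hdet, Matrix.one_mulVec]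
  have h1 : v ⬝ᵥ v ≤ c2 S⁻¹ * ((S *ᵥ v) ⬝ᵥ (S *ᵥ v)) := by
    conv_lhs => rw [hv]
    exact q_mulVec_le _ _
  have h2 : 0 ≤ (S *ᵥ v) ⬝ᵥ (S *ᵥ v) := dot_self_nonneg _
  rw [key]
  nlinarith

lemma hasDerivAt_mulVec {k l : ℕ} (M : Matrix (Fin k) (Fin l) ℝ) {f : ℝ → Fin l → ℝ}
    {f' : Fin l → ℝ} {t : ℝ} (hf : HasDerivAt f f' t) :
    HasDerivAt (fun s => M *ᵥ f s) (M *ᵥ f') t := by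
  have h := ((Matrix.mulVecLin M).toContinuousLinearMap.hasFDerivAt
    (x := f t)).comp_hasDerivAt t hf
  exact h

lemma hasDerivAt_dot {f g : ℝ → Fin n → ℝ} {f' g' : Fin n → ℝ} {t : ℝ}
    (hf : HasDerivAt f f' t) (hg : HasDerivAt g g' t) :
    HasDerivAt (fun s => f s ⬝ᵥ g s) (f' ⬝ᵥ g t + f t ⬝ᵥ g') t := by
  have h : ∀ k : Fin n, HasDerivAt (fun s => f s k * g s k)
      (f' k * g t k + f t k * g' k) t :=
    fun k => (hasDerivAt_pi.1 hf k).mul (hasDerivAt_pi.1 hg k)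
  have h2 := HasDerivAt.fun_sum (fun k (_ : k ∈ Finset.univ) => h k)
  simpa [dotProduct, Finset.sum_add_distrib] using h2

lemma continuousAt_dot {f g : ℝ → Fin n → ℝ} {t : ℝ}
    (hf : ContinuousAt f t) (hg : ContinuousAt g t) :
    ContinuousAt (fun s => f s ⬝ᵥ g s) t := by
  simp only [dotProduct]
  exact tendsto_finset_sum _ fun k _ =>
    (((continuous_apply k).continuousAt).comp hf).mul
      (((continuous_apply k).continuousAt).comp hg)

lemma continuousAt_mulVec {k l : ℕ} (M : Matrix (Fin k) (Fin l) ℝ) {f : ℝ → Fin l → ℝ}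
    {t : ℝ} (hf : ContinuousAt f t) :
    ContinuousAt (fun s => M *ᵥ f s) t := by
  have : Continuous fun v : Fin l → ℝ => M *ᵥ v := by
    have := (Matrix.mulVecLin M).toContinuousLinearMap.continuous
    exact this
  exact this.continuousAt.comp hf

lemma integrable_of_contAt {f : ℝ → ℝ} (h : ∀ t, 0 ≤ t → ContinuousAt f t)
    {a b : ℝ} (ha : 0 ≤ a) (hb : 0 ≤ b) :
    IntervalIntegrable f MeasureTheory.volume a b := by
  apply ContinuousOn.intervalIntegrable
  intro s hs
  have : (0:ℝ) ≤ s := by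
    rcases le_total a b with hl | hl
    · rw [Set.uIcc_of_le hl] at hs; exact ha.trans hs.1
    · rw [Set.uIcc_of_ge hl] at hs; exact hb.trans hs.1
  exact (h s this).continuousWithinAt

lemma ftc {f f' : ℝ → ℝ} (hd : ∀ t, 0 ≤ t → HasDerivAt f (f' t) t)
    (hc : ∀ t, 0 ≤ t → ContinuousAt f' t) {a b : ℝ} (ha : 0 ≤ a) (hab : a ≤ b) :
    ∫ s in a..b, f' s = f b - f a := by
  apply intervalIntegral.integral_eq_sub_of_hasDerivAt
  · intro t ht
    rw [Set.uIcc_of_le hab] at ht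
    exact hd t (ha.trans ht.1)
  · exact integrable_of_contAt hc ha (ha.trans hab)

/-- Barbalat-type lemma. -/
lemma barbalat (f f' : ℝ → ℝ) (L C : ℝ)
    (hd : ∀ t, 0 ≤ t → HasDerivAt f (f' t) t)
    (hL : ∀ t, 0 ≤ t → |f' t| ≤ L)
    (h0 : ∀ t, 0 ≤ t → 0 ≤ f t)
    (hI : ∀ t, 0 ≤ t → (∫ s in (0:ℝ)..t, f s) ≤ C) :
    Tendsto f atTop (nhds 0) := by
  set L' : ℝ := |L| + 1 with hL'def
  have hL'pos : 0 < L' := by positivity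
  have hL' : ∀ t, 0 ≤ t → |f' t| ≤ L' := fun t ht =>
    (hL t ht).trans (by rw [hL'def]; linarith [le_abs_self L])
  have hcont : ∀ t, 0 ≤ t → ContinuousAt f t := fun t ht => (hd t ht).continuousAt
  have hintegr : ∀ a b : ℝ, 0 ≤ a → 0 ≤ b → IntervalIntegrable f MeasureTheory.volume a b :=
    fun a b ha hb => integrable_of_contAt hcont ha hb
  set F : ℝ → ℝ := fun t => ∫ s in (0:ℝ)..t, f s with hFdef
  have hFadd : ∀ s t : ℝ, 0 ≤ s → s ≤ t → F t - F s = ∫ u in s..t, f u := by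
    intro s t hs hst
    have := intervalIntegral.integral_add_adjacent_intervals
      (hintegr 0 s le_rfl hs) (hintegr s t hs (hs.trans hst))
    simp only [hFdef]
    linarith [this]
  have hFmono : MonotoneOn F (Set.Ici 0) := by
    intro s hs t ht hst
    have h := hFadd s t hs hst
    have hnn : 0 ≤ ∫ u in s..t, f u :=
      intervalIntegral.integral_nonneg hst (fun u hu => h0 u (hs.trans hu.1))
    linarith
  set G : ℝ → ℝ := fun t => F (max t 0) with hGdef
  have hGmono : Monotone G := fun s t hst =>
    hFmono (Set.mem_Ici.2 (le_max_right s 0)) (Set.mem_Ici.2 (le_max_right t 0))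
      (max_le_max hst le_rfl)
  have hGbdd : BddAbove (Set.range G) := by
    refine ⟨C, ?_⟩
    rintro _ ⟨t, rfl⟩
    exact hI (max t 0) (le_max_right t 0)
  have hGlim : Tendsto G atTop (nhds (⨆ t, G t)) := tendsto_atTop_ciSup hGmono hGbdd
  rw [NormedAddCommGroup.tendsto_nhds_zero]
  intro ε hε
  set δ : ℝ := ε / (2 * L') with hδdef
  have hδpos : 0 < δ := by positivity
  have hdiff : Tendsto (fun t => G (t + δ) - G t) atTop (nhds 0) := by
    have h1 : Tendsto (fun t => G (t + δ)) atTop (nhds (⨆ t, G t)) :=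
      hGlim.comp (tendsto_atTop_add_const_right _ δ tendsto_id)
    simpa using h1.sub hGlim
  have hsmall : ∀ᶠ t in atTop, G (t + δ) - G t < δ * (ε / 2) := by
    have := hdiff.eventually (eventually_lt_nhds (show (0:ℝ) < δ * (ε/2) by positivity))
    simpa using this
  filter_upwards [hsmall, eventually_ge_atTop (0:ℝ)] with t hts ht0
  rw [Real.norm_eq_abs, abs_of_nonneg (h0 t ht0)]
  by_contra hcon
  push_neg at hcon
  have hlow : ∀ s ∈ Set.Icc t (t + δ), ε / 2 ≤ f s := by
    intro s hs
    have hbd := norm_image_sub_le_of_norm_deriv_le_segment'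
      (f := f) (f' := f') (a := t) (b := t + δ) (C := L')
      (fun x hx => (hd x (ht0.trans hx.1)).hasDerivWithinAt)
      (fun x hx => hL' x (ht0.trans hx.1)) s hs
    rw [Real.norm_eq_abs] at hbd
    have h1 : |f s - f t| ≤ L' * δ := hbd.trans (by
      have hsd : s - t ≤ δ := by linarith [hs.2]
      nlinarith [hL'pos.le])
    have h2 : L' * δ = ε / 2 := by
      rw [hδdef]; field_simp
    have h3 := abs_le.mp (h1.trans_eq h2)
    linarith [hcon, h3.1]
  have hFd : G (t + δ) - G t = ∫ u in t..(t+δ), f u := by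
    have h1 : max t 0 = t := max_eq_left ht0
    have h2 : max (t + δ) 0 = t + δ := max_eq_left (by linarith)
    simp only [hGdef, h1, h2]
    exact hFadd t (t + δ) ht0 (by linarith)
  have hmon : δ * (ε / 2) ≤ ∫ u in t..(t+δ), f u := by
    have hci : IntervalIntegrable (fun _ : ℝ => ε / 2) MeasureTheory.volume t (t + δ) :=
      intervalIntegrable_const
    have hfi : IntervalIntegrable f MeasureTheory.volume t (t + δ) :=
      hintegr t (t + δ) ht0 (by linarith)
    have hmo := intervalIntegral.integral_mono_on (by linarith : t ≤ t + δ) hci hfi hlow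
    rw [intervalIntegral.integral_const] at hmo
    simpa [smul_eq_mul, add_sub_cancel_left] using hmo
  rw [hFd] at hts
  linarith

end AdaptiveProof

namespace AdaptiveProof

lemma mulVec_sum_smul {k l N : ℕ} (M : Matrix (Fin k) (Fin l) ℝ) (c : Fin N → ℝ)
    (v : Fin N → Fin l → ℝ) :
    M *ᵥ (∑ p, c p • v p) = ∑ p, c p • (M *ᵥ v p) := by
  simp only [← Matrix.mulVecLin_apply, map_sum, LinearMap.map_smul]

end AdaptiveProof

open AdaptiveProof in
set_option maxHeartbeats 2000000 in
/-- **Lemma 3.** If every adaptive gain ρᵢ is bounded on [0,∞), then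
ζᵢ(t) → 0 as t → ∞ for every i. -/
theorem bounded_gains_imply_network_stability
    {n m N : ℕ} (hN : 1 ≤ N)
    (A : Matrix (Fin n) (Fin n) ℝ) (B : Matrix (Fin n) (Fin m) ℝ)
    (P : Matrix (Fin n) (Fin n) ℝ) (hP : P.PosDef)
    (hRic : Aᵀ * P + P * A - P * B * Bᵀ * P + 1 = 0)
    (a : Fin N → Fin N → ℝ)
    (ha : ∀ i j, 0 ≤ a i j) (haii : ∀ i, a i i = 0)
    (x : Fin N → ℝ → (Fin n → ℝ)) (u : Fin N → ℝ → (Fin m → ℝ))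
    (ρ : Fin N → ℝ → ℝ) (ζ : Fin N → ℝ → (Fin n → ℝ))
    (hζ : ∀ i t, ζ i t = ∑ j, a i j • (x i t - x j t))
    (hu : ∀ i t, 0 ≤ t → u i t = -(ρ i t) • (Bᵀ * P) *ᵥ ζ i t)
    (hx : ∀ i t, 0 ≤ t → HasDerivAt (x i) (A *ᵥ x i t + B *ᵥ u i t) t)
    (hρ : ∀ i t, 0 ≤ t →
      HasDerivAt (ρ i) (ζ i t ⬝ᵥ ((P * B * Bᵀ * P) *ᵥ ζ i t)) t)
    (hbdd : ∀ i, ∃ M : ℝ, ∀ t, 0 ≤ t → ρ i t ≤ M) :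
    ∀ i, Tendsto (fun t => ζ i t) atTop (nhds 0) := by
  classical
  intro i
  obtain ⟨c, hc, hcle⟩ := posdef_lower hP
  have hPq_nn : ∀ v : Fin n → ℝ, 0 ≤ v ⬝ᵥ (P *ᵥ v) := fun v => by
    nlinarith [hcle v, dot_self_nonneg v]
  have hPt : Pᵀ = P := by
    have h := hP.isHermitian
    rwa [Matrix.IsHermitian, Matrix.conjTranspose_eq_transpose_of_trivial] at h
  choose Mf hMf using hbdd
  set y : Fin N → ℝ → (Fin m → ℝ) := fun j t => (Bᵀ * P) *ᵥ ζ j t with hydef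
  set g : Fin N → ℝ → ℝ := fun j t => y j t ⬝ᵥ y j t with hgdef
  set W : Fin N → ℝ → (Fin m → ℝ) :=
    fun j t => ∑ k, a j k • ((ρ k t) • y k t - (ρ j t) • y j t) with hWdef
  set G : ℝ → ℝ := fun t => ∑ j, g j t with hGdef
  have hfact : (Bᵀ * P)ᵀ * (Bᵀ * P) = P * B * Bᵀ * P := by
    rw [Matrix.transpose_mul, Matrix.transpose_transpose, hPt]
    exact (Matrix.mul_assoc (P * B) Bᵀ P).symm
  have hρ' : ∀ j t, 0 ≤ t → HasDerivAt (ρ j) (g j t) t := by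
    intro j t ht
    have h := hρ j t ht
    have he : g j t = ζ j t ⬝ᵥ ((P * B * Bᵀ * P) *ᵥ ζ j t) := by
      simp only [hgdef, hydef]
      rw [q_factor, hfact]
    rwa [he]
  -- derivative of ζ
  have hζfun : ∀ j, ζ j = fun s => ∑ k, a j k • (x j s - x k s) :=
    fun j => funext fun s => hζ j s
  have hζd : ∀ j t, 0 ≤ t → HasDerivAt (ζ j) (A *ᵥ ζ j t + B *ᵥ W j t) t := by
    intro j t ht
    have h1 : HasDerivAt (fun s => ∑ k, a j k • (x j s - x k s))
        (∑ k, a j k • ((A *ᵥ x j t + B *ᵥ u j t) - (A *ᵥ x k t + B *ᵥ u k t))) t :=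
      HasDerivAt.fun_sum fun k _ => ((hx j t ht).sub (hx k t ht)).const_smul (a j k)
    have heq : (∑ k, a j k • ((A *ᵥ x j t + B *ᵥ u j t) - (A *ᵥ x k t + B *ᵥ u k t)))
        = A *ᵥ ζ j t + B *ᵥ W j t := by
      calc ∑ k, a j k • ((A *ᵥ x j t + B *ᵥ u j t) - (A *ᵥ x k t + B *ᵥ u k t))
          = ∑ k, (a j k • (A *ᵥ (x j t - x k t)) + a j k • (B *ᵥ (u j t - u k t))) := by
            refine Finset.sum_congr rfl fun k _ => ?_
            rw [← smul_add]
            congr 1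
            rw [Matrix.mulVec_sub, Matrix.mulVec_sub]
            abel
        _ = (∑ k, a j k • (A *ᵥ (x j t - x k t)))
              + ∑ k, a j k • (B *ᵥ (u j t - u k t)) := Finset.sum_add_distrib
        _ = A *ᵥ ζ j t + B *ᵥ W j t := by
            congr 1
            · rw [hζ j t, mulVec_sum_smul]
            · simp only [hWdef]
              rw [mulVec_sum_smul]
              refine Finset.sum_congr rfl fun k _ => ?_
              congr 1
              rw [hu j t ht, hu k t ht]
              simp only [hydef]
              rw [neg_smul, neg_smul]
              abel
    exact (heq ▸ h1).congr_of_eventuallyEq (Filter.Eventually.of_forall fun s => hζ j s)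
  -- continuity facts
  have hζc : ∀ j t, 0 ≤ t → ContinuousAt (ζ j) t := fun j t ht => (hζd j t ht).continuousAt
  have hρc : ∀ j t, 0 ≤ t → ContinuousAt (ρ j) t := fun j t ht => (hρ' j t ht).continuousAt
  have hyc : ∀ j t, 0 ≤ t → ContinuousAt (y j) t := fun j t ht => by
    simp only [hydef]
    exact continuousAt_mulVec _ (hζc j t ht)
  have hgc : ∀ j t, 0 ≤ t → ContinuousAt (g j) t := fun j t ht => by
    simp only [hgdef]
    exact continuousAt_dot (hyc j t ht) (hyc j t ht)
  have hWc : ∀ j t, 0 ≤ t → ContinuousAt (W j) t := fun j t ht => by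
    simp only [hWdef]
    exact tendsto_finset_sum _ fun k _ =>
      ((((hρc k t ht).smul (hyc k t ht)).sub ((hρc j t ht).smul (hyc j t ht))).const_smul
        (a j k))
  have hGc : ∀ t, 0 ≤ t → ContinuousAt G t := fun t ht => by
    simp only [hGdef]
    exact tendsto_finset_sum _ fun k _ => hgc k t ht
  -- Lyapunov function
  set V : Fin N → ℝ → ℝ := fun j t => ζ j t ⬝ᵥ (P *ᵥ ζ j t) with hVdef
  set D : Fin N → ℝ → ℝ := fun j t =>
    (A *ᵥ ζ j t + B *ᵥ W j t) ⬝ᵥ (P *ᵥ ζ j t)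
      + ζ j t ⬝ᵥ (P *ᵥ (A *ᵥ ζ j t + B *ᵥ W j t)) with hDdef
  have hVd : ∀ j t, 0 ≤ t → HasDerivAt (V j) (D j t) t := fun j t ht => by
    simp only [hVdef, hDdef]
    exact hasDerivAt_dot (hζd j t ht) (hasDerivAt_mulVec P (hζd j t ht))
  have hDc : ∀ j t, 0 ≤ t → ContinuousAt (D j) t := fun j t ht => by
    simp only [hDdef]
    have hd : ContinuousAt (fun s => A *ᵥ ζ j s + B *ᵥ W j s) t :=
      (continuousAt_mulVec A (hζc j t ht)).add (continuousAt_mulVec B (hWc j t ht))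
    exact (continuousAt_dot hd (continuousAt_mulVec P (hζc j t ht))).add
      (continuousAt_dot (hζc j t ht) (continuousAt_mulVec P hd))
  -- Riccati rearranged
  have hRic' : P * A + (P * A)ᵀ = P * B * Bᵀ * P - 1 := by
    have h2 : (P * A)ᵀ = Aᵀ * P := by rw [Matrix.transpose_mul, hPt]
    rw [h2]
    calc P * A + Aᵀ * P
        = (Aᵀ * P + P * A - P * B * Bᵀ * P + 1) + (P * B * Bᵀ * P - 1) := by abel
      _ = P * B * Bᵀ * P - 1 := by rw [hRic, zero_add]
  -- pointwise identity for D
  have hDeq : ∀ j t, D j t = g j t - ζ j t ⬝ᵥ ζ j t + 2 * (y j t ⬝ᵥ W j t) := by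
    intro j t
    simp only [hDdef]
    rw [dot_mulVec_symm P hPt (A *ᵥ ζ j t + B *ᵥ W j t) (ζ j t)]
    have hsplit : ζ j t ⬝ᵥ (P *ᵥ (A *ᵥ ζ j t + B *ᵥ W j t))
        = ζ j t ⬝ᵥ ((P * A) *ᵥ ζ j t) + ζ j t ⬝ᵥ ((P * B) *ᵥ W j t) := by
      rw [Matrix.mulVec_add, dotProduct_add, Matrix.mulVec_mulVec,
        Matrix.mulVec_mulVec]
    rw [hsplit]
    have h1 : ζ j t ⬝ᵥ ((P * A) *ᵥ ζ j t) + ζ j t ⬝ᵥ ((P * A) *ᵥ ζ j t)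
        = g j t - ζ j t ⬝ᵥ ζ j t := by
      nth_rewrite 2 [dot_mulVec_tr]
      rw [← dotProduct_add, ← Matrix.add_mulVec, hRic', Matrix.sub_mulVec,
        dotProduct_sub, Matrix.one_mulVec]
      congr 1
      simp only [hgdef, hydef]
      rw [q_factor, hfact]
    have h2 : ζ j t ⬝ᵥ ((P * B) *ᵥ W j t) = y j t ⬝ᵥ W j t := by
      rw [dot_mulVec_left]
      congr 1
      simp only [hydef]
      rw [Matrix.transpose_mul, hPt]
    rw [h2]
    ring_nf
    nlinarith [h1, h2]
  -- constants
  set R : ℝ := ∑ j, (|ρ j 0| + |Mf j|) with hRdef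
  set Asum : ℝ := ∑ p, ∑ q, (a p q) ^ 2 with hAsumdef
  set K : ℝ := 2 + 2 * N * Asum * R ^ 2 * (1 + N) with hKdef
  set S : ℝ := ∑ j, (Mf j - ρ j 0) with hSdef
  have hg0 : ∀ j t, 0 ≤ g j t := fun j t => by
    simp only [hgdef]; exact dot_self_nonneg _
  have hG0 : ∀ t, 0 ≤ G t := fun t => by
    simp only [hGdef]; exact Finset.sum_nonneg fun j _ => hg0 j t
  have hgleG : ∀ j t, g j t ≤ G t := fun j t => by
    simp only [hGdef]
    exact Finset.single_le_sum (fun k _ => hg0 k t) (Finset.mem_univ j)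
  have hρint : ∀ j s t, 0 ≤ s → s ≤ t → ρ j t - ρ j s = ∫ v in s..t, g j v := by
    intro j s t hs hst
    rw [ftc (hρ' j) (hgc j) hs hst]
  have hρmono : ∀ j s t, 0 ≤ s → s ≤ t → ρ j s ≤ ρ j t := by
    intro j s t hs hst
    have h := hρint j s t hs hst
    have h2 : 0 ≤ ∫ v in s..t, g j v :=
      intervalIntegral.integral_nonneg hst (fun v _ => hg0 j v)
    linarith
  have hRnn : 0 ≤ R := by
    simp only [hRdef]
    exact Finset.sum_nonneg fun j _ => by positivity
  have hAsnn : 0 ≤ Asum := by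
    simp only [hAsumdef]
    exact Finset.sum_nonneg fun p _ => Finset.sum_nonneg fun q _ => sq_nonneg _
  have hKnn : 0 ≤ K := by
    simp only [hKdef]; positivity
  have hSnn : 0 ≤ S := by
    simp only [hSdef]
    exact Finset.sum_nonneg fun j _ => by linarith [hMf j 0 le_rfl]
  have hρabs : ∀ j t, 0 ≤ t → |ρ j t| ≤ R := by
    intro j t ht
    have h1 : ρ j 0 ≤ ρ j t := hρmono j 0 t le_rfl ht
    have h2 : ρ j t ≤ Mf j := hMf j t ht
    have h3 : |ρ j t| ≤ |ρ j 0| + |Mf j| := by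
      rw [abs_le]
      constructor
      · have h4 := neg_abs_le (ρ j 0)
        have h5 := abs_nonneg (Mf j)
        linarith
      · have h4 := le_abs_self (Mf j)
        have h5 := abs_nonneg (ρ j 0)
        linarith
    refine h3.trans ?_
    simp only [hRdef]
    exact Finset.single_le_sum (f := fun k => |ρ k 0| + |Mf k|)
      (fun k _ => by positivity) (Finset.mem_univ j)
  have hρsq : ∀ j t, 0 ≤ t → (ρ j t) ^ 2 ≤ R ^ 2 := by
    intro j t ht
    have h := hρabs j t ht
    have h2 := abs_nonneg (ρ j t)
    nlinarith [sq_abs (ρ j t)]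
  have hAsq : ∀ p q, (a p q) ^ 2 ≤ Asum := by
    intro p q
    have h1 : (a p q) ^ 2 ≤ ∑ q', (a p q') ^ 2 :=
      Finset.single_le_sum (f := fun q' => (a p q') ^ 2)
        (fun l _ => sq_nonneg _) (Finset.mem_univ q)
    have h2 : (∑ q', (a p q') ^ 2) ≤ Asum := by
      simp only [hAsumdef]
      exact Finset.single_le_sum (f := fun p' => ∑ q', (a p' q') ^ 2)
        (fun k _ => Finset.sum_nonneg fun l _ => sq_nonneg _) (Finset.mem_univ p)
    exact h1.trans h2
  -- bound on W
  have hqW : ∀ j t, 0 ≤ t → W j t ⬝ᵥ W j t ≤ 2 * N * Asum * R ^ 2 * (1 + N) * G t := by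
    intro j t ht
    have hWq : W j t ⬝ᵥ W j t ≤ (N : ℝ) *
        ∑ k, ((a j k • (ρ k t • y k t - ρ j t • y j t)) ⬝ᵥ
          (a j k • (ρ k t • y k t - ρ j t • y j t))) := by
      simp only [hWdef]
      exact q_sum_le _
    have hterm : ∀ k, (a j k • (ρ k t • y k t - ρ j t • y j t)) ⬝ᵥ
        (a j k • (ρ k t • y k t - ρ j t • y j t))
        ≤ Asum * (2 * (R ^ 2 * g k t) + 2 * (R ^ 2 * g j t)) := by
      intro k
      rw [q_smul]
      have hgy : ∀ p : Fin N, g p t = y p t ⬝ᵥ y p t := fun p => rfl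
      have h1 := q_sub_le (ρ k t • y k t) (ρ j t • y j t)
      rw [q_smul, q_smul, ← hgy k, ← hgy j] at h1
      have hyk : (ρ k t) ^ 2 * g k t ≤ R ^ 2 * g k t :=
        mul_le_mul_of_nonneg_right (hρsq k t ht) (hg0 k t)
      have hyj : (ρ j t) ^ 2 * g j t ≤ R ^ 2 * g j t :=
        mul_le_mul_of_nonneg_right (hρsq j t ht) (hg0 j t)
      have hq : (ρ k t • y k t - ρ j t • y j t) ⬝ᵥ (ρ k t • y k t - ρ j t • y j t)
          ≤ 2 * (R ^ 2 * g k t) + 2 * (R ^ 2 * g j t) := by linarith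
      have hq0 : 0 ≤ (ρ k t • y k t - ρ j t • y j t) ⬝ᵥ
          (ρ k t • y k t - ρ j t • y j t) := dot_self_nonneg _
      exact mul_le_mul (hAsq j k) hq hq0 hAsnn
    have hsum : ∑ k, ((a j k • (ρ k t • y k t - ρ j t • y j t)) ⬝ᵥ
        (a j k • (ρ k t • y k t - ρ j t • y j t)))
        ≤ ∑ k, Asum * (2 * (R ^ 2 * g k t) + 2 * (R ^ 2 * g j t)) :=
      Finset.sum_le_sum fun k _ => hterm k
    have hsum2 : ∑ k, Asum * (2 * (R ^ 2 * g k t) + 2 * (R ^ 2 * g j t))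
        = 2 * Asum * R ^ 2 * G t + 2 * N * Asum * R ^ 2 * g j t := by
      calc ∑ k, Asum * (2 * (R ^ 2 * g k t) + 2 * (R ^ 2 * g j t))
          = ∑ k, (2 * Asum * R ^ 2 * g k t + 2 * Asum * R ^ 2 * g j t) :=
            Finset.sum_congr rfl fun k _ => by ring
        _ = (∑ k, 2 * Asum * R ^ 2 * g k t) + ∑ _k : Fin N, 2 * Asum * R ^ 2 * g j t :=
            Finset.sum_add_distrib
        _ = 2 * Asum * R ^ 2 * G t + 2 * N * Asum * R ^ 2 * g j t := by
            rw [← Finset.mul_sum]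
            simp only [Finset.sum_const, Finset.card_univ, Fintype.card_fin,
              nsmul_eq_mul, hGdef]
            ring
    have hgG := hgleG j t
    have hGt := hG0 t
    have hNn : (0:ℝ) ≤ (N:ℝ) := Nat.cast_nonneg N
    calc W j t ⬝ᵥ W j t
        ≤ (N : ℝ) * ∑ k, ((a j k • (ρ k t • y k t - ρ j t • y j t)) ⬝ᵥ
            (a j k • (ρ k t • y k t - ρ j t • y j t))) := hWq
      _ ≤ (N : ℝ) * (2 * Asum * R ^ 2 * G t + 2 * N * Asum * R ^ 2 * g j t) := by
          rw [← hsum2]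
          exact mul_le_mul_of_nonneg_left hsum hNn
      _ ≤ 2 * N * Asum * R ^ 2 * (1 + N) * G t := by
          have h5 : 2 * (N:ℝ) * N * Asum * R ^ 2 * g j t
              ≤ 2 * (N:ℝ) * N * Asum * R ^ 2 * G t :=
            mul_le_mul_of_nonneg_left hgG (by positivity)
          nlinarith [h5, hGt, hAsnn, hRnn, hNn]
  -- differential inequality
  have hDle : ∀ j t, 0 ≤ t → D j t ≤ -(ζ j t ⬝ᵥ ζ j t) + K * G t := by
    intro j t ht
    rw [hDeq j t]
    have h1 : 2 * (y j t ⬝ᵥ W j t) ≤ g j t + W j t ⬝ᵥ W j t := by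
      have := two_dot_le (y j t) (W j t)
      simpa [hgdef] using this
    have h2 := hqW j t ht
    have h3 := hgleG j t
    have h4 := hG0 t
    simp only [hKdef]
    nlinarith
  -- integral of G is bounded by S
  have hGIle : ∀ t, 0 ≤ t → (∫ s in (0:ℝ)..t, G s) ≤ S := by
    intro t ht
    have heq : (∫ s in (0:ℝ)..t, G s) = ∑ j, (ρ j t - ρ j 0) := by
      have h1 : (∫ s in (0:ℝ)..t, G s) = ∑ j, ∫ s in (0:ℝ)..t, g j s := by
        simp only [hGdef]
        exact intervalIntegral.integral_finset_sum
          (fun j _ => integrable_of_contAt (hgc j) le_rfl ht)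
      rw [h1]
      exact Finset.sum_congr rfl fun j _ => (hρint j 0 t le_rfl ht).symm
    rw [heq]
    simp only [hSdef]
    exact Finset.sum_le_sum fun j _ => by
      have h := hMf j t ht
      linarith
  -- main energy estimate
  set C0 : ℝ := (∑ j, V j 0) + K * S with hC0def
  have hVnn : ∀ j t, 0 ≤ V j t := fun j t => hPq_nn (ζ j t)
  have hV0sum : ∀ j, V j 0 ≤ ∑ j', V j' 0 := fun j =>
    Finset.single_le_sum (f := fun j' => V j' 0) (fun k _ => hVnn k 0) (Finset.mem_univ j)
  have hmain : ∀ j t, 0 ≤ t →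
      V j t ≤ C0 ∧ (∫ s in (0:ℝ)..t, ζ j s ⬝ᵥ ζ j s) ≤ C0 := by
    intro j t ht
    have hζqc : ∀ s, 0 ≤ s → ContinuousAt (fun v => ζ j v ⬝ᵥ ζ j v) s :=
      fun s hs => continuousAt_dot (hζc j s hs) (hζc j s hs)
    have hEc : ∀ s, 0 ≤ s → ContinuousAt (fun v => -(ζ j v ⬝ᵥ ζ j v) + K * G v) s :=
      fun s hs => ((hζqc s hs).neg).add (continuousAt_const.mul (hGc s hs))
    have hVftc : (∫ s in (0:ℝ)..t, D j s) = V j t - V j 0 :=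
      ftc (hVd j) (hDc j) le_rfl ht
    have hint1 : IntervalIntegrable (D j) MeasureTheory.volume 0 t :=
      integrable_of_contAt (hDc j) le_rfl ht
    have hint2 : IntervalIntegrable (fun v => -(ζ j v ⬝ᵥ ζ j v) + K * G v)
        MeasureTheory.volume 0 t := integrable_of_contAt hEc le_rfl ht
    have hintq : IntervalIntegrable (fun v => ζ j v ⬝ᵥ ζ j v)
        MeasureTheory.volume 0 t := integrable_of_contAt hζqc le_rfl ht
    have hintG : IntervalIntegrable G MeasureTheory.volume 0 t :=
      integrable_of_contAt hGc le_rfl ht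
    have hmono := intervalIntegral.integral_mono_on ht hint1 hint2
      (fun s hs => hDle j s hs.1)
    have hsplit : (∫ s in (0:ℝ)..t, (-(ζ j s ⬝ᵥ ζ j s) + K * G s))
        = -(∫ s in (0:ℝ)..t, ζ j s ⬝ᵥ ζ j s) + K * ∫ s in (0:ℝ)..t, G s := by
      have hintnq : IntervalIntegrable (fun v => -(ζ j v ⬝ᵥ ζ j v))
          MeasureTheory.volume 0 t :=
        integrable_of_contAt (fun s hs => (hζqc s hs).neg) le_rfl ht
      have hintKG : IntervalIntegrable (fun v => K * G v) MeasureTheory.volume 0 t :=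
        integrable_of_contAt (fun s hs => continuousAt_const.mul (hGc s hs)) le_rfl ht
      rw [intervalIntegral.integral_add hintnq hintKG,
        intervalIntegral.integral_neg, intervalIntegral.integral_const_mul]
    have hGle := hGIle t ht
    have hKG : K * (∫ s in (0:ℝ)..t, G s) ≤ K * S :=
      mul_le_mul_of_nonneg_left hGle hKnn
    have hqnn : 0 ≤ ∫ s in (0:ℝ)..t, ζ j s ⬝ᵥ ζ j s :=
      intervalIntegral.integral_nonneg ht (fun s _ => dot_self_nonneg _)
    have hVt := hVnn j t
    have hV0 := hV0sum j
    rw [hVftc, hsplit] at hmono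
    constructor
    · simp only [hC0def]; linarith
    · simp only [hC0def]; linarith
  have hC0nn : 0 ≤ C0 := le_trans (hVnn i 0) (hmain i 0 le_rfl).1
  -- pointwise bounds
  have hqbdd : ∀ j t, 0 ≤ t → ζ j t ⬝ᵥ ζ j t ≤ c * C0 := by
    intro j t ht
    have h1 := (hmain j t ht).1
    have h2 := hcle (ζ j t)
    have h3 : c * V j t ≤ c * C0 := mul_le_mul_of_nonneg_left h1 hc.le
    exact h2.trans h3
  have hgbdd : ∀ j t, 0 ≤ t → g j t ≤ c2 (Bᵀ * P) * (c * C0) := by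
    intro j t ht
    have h1 : g j t ≤ c2 (Bᵀ * P) * (ζ j t ⬝ᵥ ζ j t) := q_mulVec_le _ _
    exact h1.trans (mul_le_mul_of_nonneg_left (hqbdd j t ht) (c2_nonneg _))
  set Gbd : ℝ := N * (c2 (Bᵀ * P) * (c * C0)) with hGbdddef
  have hGbdd : ∀ t, 0 ≤ t → G t ≤ Gbd := by
    intro t ht
    have h1 : G t ≤ ∑ _j : Fin N, c2 (Bᵀ * P) * (c * C0) := by
      simp only [hGdef]
      exact Finset.sum_le_sum fun j _ => hgbdd j t ht
    simpa [Finset.sum_const, Finset.card_univ, hGbdddef] using h1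
  have hGbdnn : 0 ≤ Gbd := le_trans (hG0 0) (hGbdd 0 le_rfl)
  -- Barbalat
  set L : ℝ := c * C0 + (2 * (c2 A * (c * C0)) +
    2 * (c2 B * (2 * N * Asum * R ^ 2 * (1 + N) * Gbd))) with hLdef
  have hf'le : ∀ t, 0 ≤ t →
      |(A *ᵥ ζ i t + B *ᵥ W i t) ⬝ᵥ ζ i t + ζ i t ⬝ᵥ (A *ᵥ ζ i t + B *ᵥ W i t)| ≤ L := by
    intro t ht
    set d : Fin n → ℝ := A *ᵥ ζ i t + B *ᵥ W i t with hddef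
    have hcomm : d ⬝ᵥ ζ i t + ζ i t ⬝ᵥ d = 2 * (ζ i t ⬝ᵥ d) := by
      rw [dotProduct_comm]; ring
    have hqζ := hqbdd i t ht
    have hqd : d ⬝ᵥ d ≤ 2 * (c2 A * (c * C0)) +
        2 * (c2 B * (2 * N * Asum * R ^ 2 * (1 + N) * Gbd)) := by
      have h1 : d ⬝ᵥ d ≤ 2 * ((A *ᵥ ζ i t) ⬝ᵥ (A *ᵥ ζ i t))
          + 2 * ((B *ᵥ W i t) ⬝ᵥ (B *ᵥ W i t)) := q_add_le _ _
      have h2 : (A *ᵥ ζ i t) ⬝ᵥ (A *ᵥ ζ i t) ≤ c2 A * (c * C0) :=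
        (q_mulVec_le A _).trans (mul_le_mul_of_nonneg_left hqζ (c2_nonneg A))
      have h3 : (B *ᵥ W i t) ⬝ᵥ (B *ᵥ W i t) ≤
          c2 B * (2 * N * Asum * R ^ 2 * (1 + N) * Gbd) := by
        refine (q_mulVec_le B _).trans ?_
        refine mul_le_mul_of_nonneg_left ?_ (c2_nonneg B)
        refine (hqW i t ht).trans ?_
        exact mul_le_mul_of_nonneg_left (hGbdd t ht) (by positivity)
      linarith
    have hup := two_dot_le (ζ i t) d
    have hdown := neg_two_dot_le (ζ i t) d
    have hqζ0 := dot_self_nonneg (ζ i t)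
    have hqd0 := dot_self_nonneg d
    rw [hcomm, abs_le]
    constructor
    · simp only [hLdef]; nlinarith
    · simp only [hLdef]; nlinarith
  have hfb : Tendsto (fun t => ζ i t ⬝ᵥ ζ i t) atTop (nhds 0) := by
    refine barbalat (fun t => ζ i t ⬝ᵥ ζ i t)
      (fun t => (A *ᵥ ζ i t + B *ᵥ W i t) ⬝ᵥ ζ i t
        + ζ i t ⬝ᵥ (A *ᵥ ζ i t + B *ᵥ W i t)) L C0
      (fun t ht => hasDerivAt_dot (hζd i t ht) (hζd i t ht))
      hf'le (fun t _ => dot_self_nonneg _) (fun t ht => (hmain i t ht).2)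
  -- conclude
  rw [tendsto_pi_nhds]
  intro k
  have hsqrt : Tendsto (fun t => Real.sqrt (ζ i t ⬝ᵥ ζ i t)) atTop (nhds 0) := by
    have h := (Real.continuous_sqrt.tendsto 0).comp hfb
    simpa using (show Tendsto (fun t => Real.sqrt (ζ i t ⬝ᵥ ζ i t)) atTop (nhds (Real.sqrt 0)) from h)
  have hb : ∀ t, ‖ζ i t k‖ ≤ Real.sqrt (ζ i t ⬝ᵥ ζ i t) := by
    intro t
    rw [Real.norm_eq_abs]
    rw [show |ζ i t k| = Real.sqrt ((ζ i t k) ^ 2) from (Real.sqrt_sq_eq_abs _).symm]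
    apply Real.sqrt_le_sqrt
    have : (ζ i t k) ^ 2 = ζ i t k * ζ i t k := sq (ζ i t k) ▸ rfl
    rw [sq]
    exact Finset.single_le_sum (f := fun l => ζ i t l * ζ i t l)
      (fun l _ => mul_self_nonneg _) (Finset.mem_univ k)
  have := squeeze_zero_norm hb hsqrt
  simpa using this
end

section
/- Let a_{ij} ≥ 0 (1 ≤ i, j ≤ N) with a_{ii} = 0, let x_1,…,x_N : [0,∞) → ℝ^n, and define ζ_i(t) = Σ_{j=1}^N a_{ij}(x_i(t) − x_j(t)). Let S ⊆ {1,…,N} be a basic bicomponent: S is nonempty, any two nodes of S are mutually reachable along directed edges of positive weight between nodes of S, and a_{ij} = 0 whenever i ∈ S and j ∉ S. If ζ_i(t) → 0 as t → ∞ for all i ∈ S, then x_p(t) − x_q(t) → 0 as t → ∞ for all p, q ∈ S; equivalently, there is a trajectory x_s such that x_j(t) − x_s(t) → 0 for every j ∈ S. (Lemma 2: synchronization within each basic bicomponent.) -/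
open Filter

/-- Factorization of linear maps: if `ker ψ ≤ ker φ` then `φ` factors through `ψ`. -/
lemma factor_through_aux {V W U : Type*} [AddCommGroup V] [Module ℝ V]
    [AddCommGroup W] [Module ℝ W] [AddCommGroup U] [Module ℝ U]
    (ψ : V →ₗ[ℝ] W) (φ : V →ₗ[ℝ] U)
    (h : LinearMap.ker ψ ≤ LinearMap.ker φ) :
    ∃ A : W →ₗ[ℝ] U, ∀ v, A (ψ v) = φ v := by
  let e := ψ.quotKerEquivRange
  let A₀ : LinearMap.range ψ →ₗ[ℝ] U :=
    ((LinearMap.ker ψ).liftQ φ h).comp e.symm.toLinearMap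
  obtain ⟨A, hA⟩ := A₀.exists_extend
  refine ⟨A, fun v => ?_⟩
  have h1 : A (ψ v) = A₀ ⟨ψ v, ⟨v, rfl⟩⟩ := by
    rw [← hA]; rfl
  rw [h1]
  have h2 : e (Submodule.Quotient.mk v) = ⟨ψ v, ⟨v, rfl⟩⟩ := by
    apply Subtype.ext
    simp [e, LinearMap.quotKerEquivRange]
  have h3 : e.symm ⟨ψ v, ⟨v, rfl⟩⟩ = Submodule.Quotient.mk v := by
    rw [← h2, LinearEquiv.symm_apply_apply]
  simp only [A₀, LinearMap.comp_apply, LinearEquiv.coe_toLinearMap, h3]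
  exact Submodule.liftQ_apply _ _ _

/-- Kernel characterization: a real function annihilated by the Laplacian rows of a
basic bicomponent `S` is constant on `S`. -/
lemma const_on_S_aux {N : ℕ} (a : Fin N → Fin N → ℝ) (ha : ∀ i j, 0 ≤ a i j)
    (S : Set (Fin N)) (hSne : S.Nonempty)
    (hSconn : ∀ p ∈ S, ∀ q ∈ S,
      Relation.ReflTransGen (fun j i => j ∈ S ∧ i ∈ S ∧ 0 < a i j) q p)
    (hSnoin : ∀ i ∈ S, ∀ j ∉ S, a i j = 0)
    (f : Fin N → ℝ) (hf : ∀ i ∈ S, ∑ j, a i j * (f i - f j) = 0) :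
    ∀ p ∈ S, ∀ q ∈ S, f p = f q := by
  classical
  obtain ⟨i0, hi0T, hi0max⟩ :=
    S.toFinset.exists_max_image f (by simpa using hSne)
  rw [Set.mem_toFinset] at hi0T
  have hmax : ∀ j ∈ S, f j ≤ f i0 := fun j hj => hi0max j (Set.mem_toFinset.2 hj)
  -- closure: if `i ∈ S` attains the max and `a i j > 0` then `f j = f i0`
  have hclosed : ∀ i ∈ S, f i = f i0 → ∀ j, 0 < a i j → f j = f i0 := by
    intro i hi hfi j haij
    have hterms : ∀ k ∈ Finset.univ, (0:ℝ) ≤ a i k * (f i - f k) := by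
      intro k _
      by_cases hkS : k ∈ S
      · exact mul_nonneg (ha i k) (by linarith [hmax k hkS, hfi.ge])
      · simp [hSnoin i hi k hkS]
    have hzero := (Finset.sum_eq_zero_iff_of_nonneg hterms).1 (hf i hi) j (Finset.mem_univ j)
    have : f i - f j = 0 := by
      rcases mul_eq_zero.1 hzero with h | h
      · exact absurd h (ne_of_gt haij)
      · exact h
    linarith [hfi]
  -- every node of S attains the max, by reachability to i0
  have hall : ∀ q ∈ S, f q = f i0 := by
    intro q hq
    have hpath := hSconn i0 hi0T q hq
    induction hpath using Relation.ReflTransGen.head_induction_on with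
    | refl => rfl
    | head h _ ih =>
        obtain ⟨haS, hcS, hpos⟩ := h
        exact hclosed _ hcS (ih hcS) _ hpos
  intro p hp q hq
  rw [hall p hp, hall q hq]

/-- **Lemma 2 (synchronization within each basic bicomponent).** Let `S` be a
basic bicomponent of the communication graph: `S` is nonempty, any two nodes of
`S` are mutually reachable along directed edges of positive weight between
nodes of `S`, and `S` has no incoming edges. If `ζᵢ(t) → 0` for all `i ∈ S`,
then `x_p(t) - x_q(t) → 0` for all `p, q ∈ S`. -/
theorem synchronization_within_basic_bicomponent
    {n N : ℕ} (a : Fin N → Fin N → ℝ)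
    (ha : ∀ i j, 0 ≤ a i j) (haii : ∀ i, a i i = 0)
    (x : Fin N → ℝ → (Fin n → ℝ)) (ζ : Fin N → ℝ → (Fin n → ℝ))
    (hζ : ∀ i t, ζ i t = ∑ j, a i j • (x i t - x j t))
    (S : Set (Fin N)) (hSne : S.Nonempty)
    (hSconn : ∀ p ∈ S, ∀ q ∈ S,
      Relation.ReflTransGen (fun j i => j ∈ S ∧ i ∈ S ∧ 0 < a i j) q p)
    (hSnoin : ∀ i ∈ S, ∀ j ∉ S, a i j = 0)
    (hstab : ∀ i ∈ S, Tendsto (fun t => ζ i t) atTop (nhds 0)) :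
    ∀ p ∈ S, ∀ q ∈ S, Tendsto (fun t => x p t - x q t) atTop (nhds 0) := by
  classical
  intro p hp q hq
  -- the Laplacian rows of S, as a linear map
  set ψ : (Fin N → Fin n → ℝ) →ₗ[ℝ] (Fin N → Fin n → ℝ) :=
    { toFun := fun y i => if i ∈ S then ∑ j, a i j • (y i - y j) else 0
      map_add' := by
        intro y z
        funext i c
        by_cases h : i ∈ S <;>
          simp [h, add_sub_add_comm, smul_add, Finset.sum_add_distrib, Finset.sum_apply,
            mul_add]
      map_smul' := by
        intro r y
        funext i c
        by_cases h : i ∈ S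
        · simp [h, smul_sub, Finset.sum_apply, Finset.sum_sub_distrib,
            Finset.mul_sum, mul_assoc]
          rw [mul_sub, Finset.mul_sum, Finset.mul_sum]
          congr 1 <;> exact Finset.sum_congr rfl fun k _ => by ring
        · simp [h] } with hψdef
  set φ : (Fin N → Fin n → ℝ) →ₗ[ℝ] (Fin n → ℝ) :=
    (LinearMap.proj p : (Fin N → Fin n → ℝ) →ₗ[ℝ] (Fin n → ℝ)) -
      (LinearMap.proj q : (Fin N → Fin n → ℝ) →ₗ[ℝ] (Fin n → ℝ)) with hφdef
  have hker : LinearMap.ker ψ ≤ LinearMap.ker φ := by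
    intro y hy
    rw [LinearMap.mem_ker] at hy ⊢
    have hy' : ∀ i ∈ S, ∑ j, a i j • (y i - y j) = (0 : Fin n → ℝ) := by
      intro i hi
      have := congrFun hy i
      simpa [hψdef, hi] using this
    have hconst : ∀ c : Fin n, y p c = y q c := by
      intro c
      refine const_on_S_aux a ha S hSne hSconn hSnoin (fun i => y i c) ?_ p hp q hq
      intro i hi
      have := congrFun (hy' i hi) c
      simpa [Finset.sum_apply, smul_sub, mul_sub, Finset.sum_sub_distrib] using this
    funext c
    show y p c - y q c = 0
    simp [hconst c]
  obtain ⟨A, hA⟩ := factor_through_aux ψ φ hker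
  have hψt : Tendsto (fun t => ψ (fun i => x i t)) atTop (nhds 0) := by
    rw [tendsto_pi_nhds]
    intro i
    by_cases h : i ∈ S
    · have := hstab i h
      simp only [hψdef, LinearMap.coe_mk, AddHom.coe_mk, h, if_true]
      have heq : (fun t => ∑ j, a i j • (x i t - x j t)) = fun t => ζ i t := by
        funext t; rw [hζ]
      rw [heq]
      simpa using this
    · simp only [hψdef, LinearMap.coe_mk, AddHom.coe_mk, h, if_false]
      simpa using tendsto_const_nhds
  have hAc : Continuous A := A.continuous_of_finiteDimensional
  have := (hAc.tendsto 0).comp hψt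
  rw [map_zero] at this
  have heq : (fun t => A (ψ (fun i => x i t))) = fun t => x p t - x q t := by
    funext t
    rw [hA]
    rfl
  rwa [← heq]
end

section
/- Let L ∈ ℝ^{N×N} have nonpositive off-diagonal entries and zero row sums (a Laplacian matrix), and suppose L is partitioned in block upper-triangular form L = [[L₀, M],[0, L']] where L₀ ∈ ℝ^{p×p} is invertible. Then the matrix −L₀⁻¹M has all entries nonnegative and each of its rows sums to 1, i.e., (−L₀⁻¹M)𝟙 = 𝟙. (Algebraic core of the convex-combination coefficients β_{j,i} in Lemma 2, equations (9)–(10).) -/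
open Matrix Finset

lemma zmat_inv_nonneg {n : ℕ} (A : Matrix (Fin n) (Fin n) ℝ)
    (hod : ∀ i j, i ≠ j → A i j ≤ 0)
    (hrs : ∀ i, 0 ≤ ∑ j, A i j)
    (hA : IsUnit A)
    (x : Fin n → ℝ) (hb : ∀ i, 0 ≤ (A *ᵥ x) i) :
    ∀ i, 0 ≤ x i := by
  by_contra hcon
  push_neg at hcon
  obtain ⟨i0, hi0⟩ := hcon
  obtain ⟨im, -, hmin⟩ := Finset.exists_min_image Finset.univ x ⟨i0, Finset.mem_univ i0⟩
  set m := x im with hm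
  have hmneg : m < 0 := lt_of_le_of_lt (hmin i0 (Finset.mem_univ i0)) hi0
  set S : Finset (Fin n) := Finset.univ.filter (fun k => x k = m) with hS
  have himS : im ∈ S := by simp [hS, hm]
  have hxm : ∀ k, m ≤ x k := fun k => hmin k (Finset.mem_univ k)
  -- key row facts
  have key : ∀ i ∈ S, (∀ k, k ∉ S → A i k = 0) ∧ ∑ k ∈ S, A i k = 0 := by
    intro i hiS
    have hxi : x i = m := by simpa [hS] using hiS
    have hsplit : (A *ᵥ x) i = (∑ k, A i k * (x k - m)) + m * ∑ k, A i k := by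
      have e1 : (A *ᵥ x) i = ∑ k, (A i k * (x k - m) + m * A i k) := by
        simp only [mulVec, dotProduct]
        exact Finset.sum_congr rfl (fun k _ => by ring)
      rw [e1, Finset.sum_add_distrib, ← Finset.mul_sum]
    have hterm : ∀ k ∈ Finset.univ, A i k * (x k - m) ≤ 0 := by
      intro k _
      rcases eq_or_ne k i with rfl | hki
      · simp [hxi]
      · exact mul_nonpos_of_nonpos_of_nonneg (hod i k (Ne.symm hki)) (by linarith [hxm k])
    have h1 : (∑ k, A i k * (x k - m)) ≤ 0 := Finset.sum_nonpos hterm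
    have h2 : m * ∑ k, A i k ≤ 0 :=
      mul_nonpos_of_nonpos_of_nonneg hmneg.le (hrs i)
    have hge := hb i
    rw [hsplit] at hge
    have hz1 : (∑ k, A i k * (x k - m)) = 0 := by linarith
    have hz2 : m * ∑ k, A i k = 0 := by linarith
    have hrs0 : ∑ k, A i k = 0 := by
      rcases mul_eq_zero.1 hz2 with h | h
      · exact absurd h hmneg.ne
      · exact h
    have heach : ∀ k ∈ Finset.univ, A i k * (x k - m) = 0 :=
      (Finset.sum_eq_zero_iff_of_nonpos hterm).1 hz1
    have hout : ∀ k, k ∉ S → A i k = 0 := by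
      intro k hkS
      have hkne : x k ≠ m := by simpa [hS] using hkS
      have : x k - m ≠ 0 := sub_ne_zero.2 hkne
      have := heach k (Finset.mem_univ k)
      rcases mul_eq_zero.1 this with h | h
      · exact h
      · exact absurd h ‹x k - m ≠ 0›
    refine ⟨hout, ?_⟩
    rw [← hrs0]
    symm
    rw [← Finset.sum_subset (Finset.subset_univ S)]
    intro k _ hk
    exact hout k hk
  -- build linear endomorphism of (S → ℝ)
  classical
  let g : (S → ℝ) →ₗ[ℝ] (S → ℝ) :=
    { toFun := fun c k => ∑ i : S, c i * A i k
      map_add' := by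
        intro c d; funext k
        simp [add_mul, Finset.sum_add_distrib]
      map_smul' := by
        intro r c; funext k
        simp [Finset.mul_sum, mul_assoc] }
  -- extension of coefficient vectors
  have hginj : Function.Injective g := by
    intro c d hcd
    have hAinj : Function.Injective A.vecMul := vecMul_injective_iff_isUnit.2 hA
    let ext : (S → ℝ) → (Fin n → ℝ) := fun c k => if h : k ∈ S then c ⟨k, h⟩ else 0
    have hvm : ∀ c : (S → ℝ), ∀ k, ∀ hk : k ∈ S, (A.vecMul (ext c)) k = g c ⟨k, hk⟩ := by
      intro c k hk
      simp only [vecMul, dotProduct]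
      rw [← Finset.sum_subset (Finset.subset_univ S)]
      · rw [← Finset.sum_attach S (fun i => ext c i * A i k)]
        simp [ext, g]
      · intro i _ hiS
        simp [ext, hiS]
    have hvm0 : ∀ c : (S → ℝ), ∀ k, k ∉ S → (A.vecMul (ext c)) k = 0 := by
      intro c k hk
      simp only [vecMul, dotProduct]
      apply Finset.sum_eq_zero
      intro i _
      by_cases hiS : i ∈ S
      · simp [(key i hiS).1 k hk]
      · simp [ext, hiS]
    have : A.vecMul (ext c) = A.vecMul (ext d) := by
      funext k
      by_cases hk : k ∈ S
      · rw [hvm c k hk, hvm d k hk, hcd]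
      · rw [hvm0 c k hk, hvm0 d k hk]
    have hext : ext c = ext d := hAinj this
    funext k
    have := congr_fun hext k.1
    simpa [ext, k.2] using this
  have hgsurj : Function.Surjective g :=
    (LinearMap.injective_iff_surjective (f := g)).1 hginj
  obtain ⟨c, hc⟩ := hgsurj (Pi.single ⟨im, himS⟩ 1)
  have hsum : ∑ k : S, g c k = 0 := by
    simp only [g, LinearMap.coe_mk, AddHom.coe_mk]
    rw [Finset.sum_comm]
    apply Finset.sum_eq_zero
    intro i _
    rw [← Finset.mul_sum]
    have : ∑ k : S, A i.1 k.1 = 0 := by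
      rw [Finset.sum_coe_sort S (fun k => A i.1 k)]
      exact (key i.1 i.2).2
    rw [this, mul_zero]
  rw [hc] at hsum
  simp [Finset.sum_pi_single] at hsum

/-- **Convex-combination coefficients (algebraic core of Lemma 2, eqs. (9)–(10)).**
Let `L` be a Laplacian matrix (nonpositive off-diagonal entries, zero row sums)
in block upper-triangular form `[[L₀, M],[0, L']]` with `L₀` invertible. Then
`-L₀⁻¹ M` has nonnegative entries and each of its rows sums to `1`. -/
theorem neg_inv_block_rows_sum_to_one
    {p q : ℕ} (L : Matrix (Fin p ⊕ Fin q) (Fin p ⊕ Fin q) ℝ)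
    (hoff : ∀ i j, i ≠ j → L i j ≤ 0)
    (hrow : ∀ i, ∑ j, L i j = 0)
    (hlow : ∀ i j, L (Sum.inr i) (Sum.inl j) = 0)
    (hL0 : IsUnit (L.submatrix Sum.inl Sum.inl)) :
    (∀ i j, 0 ≤ (-((L.submatrix Sum.inl Sum.inl)⁻¹ * L.submatrix Sum.inl Sum.inr)) i j) ∧
      (-((L.submatrix Sum.inl Sum.inl)⁻¹ * L.submatrix Sum.inl Sum.inr)) *ᵥ
        (fun _ => (1 : ℝ)) = fun _ => (1 : ℝ) := by
  classical
  set L0 := L.submatrix Sum.inl Sum.inl with hL0def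
  set M := L.submatrix Sum.inl Sum.inr with hMdef
  have hdet : IsUnit L0.det := (Matrix.isUnit_iff_isUnit_det _).1 hL0
  have hM : ∀ i j, M i j ≤ 0 := fun i j => hoff _ _ (by simp)
  have hod0 : ∀ i j, i ≠ j → L0 i j ≤ 0 := fun i j hij =>
    hoff _ _ (fun h => hij (Sum.inl_injective h))
  have hrowsum : ∀ i, ∑ j, L0 i j = - ∑ j, M i j := by
    intro i
    have := hrow (Sum.inl i)
    rw [Fintype.sum_sum_type] at this
    have h1 : ∑ j, L0 i j + ∑ j, M i j = 0 := this
    linarith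
  have hrs0 : ∀ i, 0 ≤ ∑ j, L0 i j := by
    intro i
    rw [hrowsum i]
    have : ∑ j, M i j ≤ 0 := Finset.sum_nonpos (fun j _ => hM i j)
    linarith
  have hLX : L0 * (-(L0⁻¹ * M)) = -M := by
    rw [Matrix.mul_neg, ← Matrix.mul_assoc, Matrix.mul_nonsing_inv L0 hdet, Matrix.one_mul]
  constructor
  · intro i j
    refine zmat_inv_nonneg L0 hod0 hrs0 hL0 (fun k => (-(L0⁻¹ * M)) k j) ?_ i
    intro k
    have : (L0 *ᵥ fun k => (-(L0⁻¹ * M)) k j) k = (L0 * (-(L0⁻¹ * M))) k j := by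
      simp [mulVec, dotProduct, Matrix.mul_apply]
    rw [this, hLX]
    simpa using hM k j
  · have h1 : M *ᵥ (fun _ => (1:ℝ)) = -(L0 *ᵥ fun _ => (1:ℝ)) := by
      funext i
      simp only [mulVec, dotProduct, mul_one, Pi.neg_apply]
      rw [hrowsum i]; ring
    calc (-(L0⁻¹ * M)) *ᵥ (fun _ => (1:ℝ))
        = L0⁻¹ *ᵥ (-(M *ᵥ fun _ => (1:ℝ))) := by
          rw [Matrix.neg_mulVec, ← Matrix.mulVec_mulVec, Matrix.mulVec_neg]
      _ = L0⁻¹ *ᵥ (L0 *ᵥ fun _ => (1:ℝ)) := by rw [h1, neg_neg]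
      _ = (L0⁻¹ * L0) *ᵥ (fun _ => (1:ℝ)) := Matrix.mulVec_mulVec _ _ _
      _ = fun _ => (1:ℝ) := by rw [Matrix.nonsing_inv_mul L0 hdet, Matrix.one_mulVec]
end

section
/- Let L ∈ ℝ^{N×N} be the Laplacian matrix of a weighted directed graph that is strongly connected. Then there exist positive reals α_1,…,α_N > 0 and γ > 0 such that, with H = diag(α_1,…,α_N), the matrix HL + LᵀH − 3γ LᵀL is positive semidefinite, i.e., HL + LᵀH ≥ 3γ LᵀL in the Loewner order. (Appendix Lemma on Lyapunov certificates for strongly connected Laplacians.) -/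
open Matrix

section Aux

variable {N : ℕ}

/-- Propagation along reflexive-transitive closure of the edge relation. -/
lemma aux_propagate {a : Fin N → Fin N → ℝ} (P : Fin N → Prop)
    (hstep : ∀ i j, 0 < a i j → P j → P i)
    {p q : Fin N} (h : Relation.ReflTransGen (fun j i => 0 < a i j) q p) :
    P q → P p := by
  induction h with
  | refl => exact id
  | tail _ hbc ih => exact fun hq => hstep _ _ hbc (ih hq)

lemma aux_all_zero {f : Fin N → ℝ} (h : ∀ j, f j ≤ 0) (hsum : ∑ j, f j = 0) :
    ∀ j, f j = 0 := by
  intro j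
  have := (Finset.sum_eq_zero_iff_of_nonpos (fun i _ => h i)).mp hsum
  exact this j (Finset.mem_univ j)

/-- Quadratic form of a symmetric Laplacian-type matrix. -/
lemma aux_lap_quad {c : Fin N → Fin N → ℝ} {M : Matrix (Fin N) (Fin N) ℝ}
    (hM : ∀ i j, M i j = (if i = j then ∑ k, c i k else 0) - c i j)
    (hsym : ∀ i j, c i j = c j i) (x : Fin N → ℝ) :
    2 * (x ⬝ᵥ (M *ᵥ x)) = ∑ i, ∑ j, c i j * (x i - x j) ^ 2 := by
  have key : x ⬝ᵥ (M *ᵥ x) = ∑ i, ∑ j, c i j * (x i * x i - x i * x j) := by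
    simp only [dotProduct, mulVec, dotProduct]
    refine Finset.sum_congr rfl fun i _ => ?_
    have h1 : ∑ j, M i j * x j
        = (∑ j, (if j = i then (∑ k, c i k) * x j else 0)) - ∑ j, c i j * x j := by
      rw [← Finset.sum_sub_distrib]
      refine Finset.sum_congr rfl fun j _ => ?_
      rw [hM]
      by_cases hij : i = j
      · rw [if_pos hij, if_pos hij.symm]; ring
      · rw [if_neg hij, if_neg (fun h => hij h.symm)]; ring
    rw [h1, Finset.sum_ite_eq' Finset.univ i (fun j => (∑ k, c i k) * x j)]
    simp only [Finset.mem_univ, if_true, Finset.sum_mul, mul_sub, Finset.mul_sum]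
    rw [← Finset.sum_sub_distrib]
    refine Finset.sum_congr rfl fun j _ => ?_
    ring
  have key2 : x ⬝ᵥ (M *ᵥ x) = ∑ i, ∑ j, c i j * (x j * x j - x j * x i) := by
    rw [key, Finset.sum_comm]
    exact Finset.sum_congr rfl fun i _ => Finset.sum_congr rfl fun j _ => by
      rw [hsym]
  calc 2 * (x ⬝ᵥ (M *ᵥ x))
      = (∑ i, ∑ j, c i j * (x i * x i - x i * x j))
        + (∑ i, ∑ j, c i j * (x j * x j - x j * x i)) := by
        rw [← key, ← key2]; ring
    _ = ∑ i, ∑ j, c i j * (x i - x j) ^ 2 := by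
        rw [← Finset.sum_add_distrib]
        refine Finset.sum_congr rfl fun i _ => ?_
        rw [← Finset.sum_add_distrib]
        refine Finset.sum_congr rfl fun j _ => ?_
        ring

end Aux

/-- **Appendix Lemma (Lyapunov certificate for strongly connected Laplacians).**
Let `L` be the Laplacian matrix of a strongly connected weighted directed graph
(edge from `j` to `i` iff `a i j > 0`). Then there exist `α₁,…,α_N > 0` and
`γ > 0` such that, with `H = diag(α)`, `HL + LᵀH ≥ 3γ LᵀL` in the Loewner
order. -/
theorem strongly_connected_laplacian_lyapunov
    {N : ℕ} (a : Fin N → Fin N → ℝ)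
    (ha : ∀ i j, 0 ≤ a i j) (haii : ∀ i, a i i = 0)
    (L : Matrix (Fin N) (Fin N) ℝ)
    (hL : ∀ i j, L i j = if i = j then ∑ k, a i k else -(a i j))
    (hsc : ∀ p q : Fin N, Relation.ReflTransGen (fun j i => 0 < a i j) q p) :
    ∃ (α : Fin N → ℝ) (γ : ℝ), (∀ i, 0 < α i) ∧ 0 < γ ∧
      (Matrix.diagonal α * L + Lᵀ * Matrix.diagonal α
        - (3 * γ) • (Lᵀ * L)).PosSemidef := by
  classical
  rcases Nat.eq_zero_or_pos N with hN | hN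
  · subst hN
    refine ⟨fun _ => 1, 1, fun i => one_pos, one_pos, posSemidef_iff_dotProduct_mulVec.mpr ⟨?_, ?_⟩⟩
    · ext i j; exact i.elim0
    · intro x; simp [dotProduct]
  -- Row sums of L are zero
  have hrow : ∀ i, ∑ j, L i j = 0 := by
    intro i
    have h1 : ∀ j, L i j = (if j = i then (∑ k, a i k) + a i j else 0) - a i j := by
      intro j
      rw [hL]
      by_cases hij : i = j
      · subst hij; simp
      · simp [hij, Ne.symm hij]
    rw [Finset.sum_congr rfl fun j _ => h1 j, Finset.sum_sub_distrib,
      Finset.sum_ite_eq' Finset.univ i (fun j => (∑ k, a i k) + a i j)]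
    simp [haii]
  have hL1 : L *ᵥ (fun _ => (1:ℝ)) = 0 := by
    funext i
    simp only [mulVec, dotProduct, mul_one, Pi.zero_apply]
    exact hrow i
  have h1ne : (fun _ => (1:ℝ)) ≠ (0 : Fin N → ℝ) := by
    intro h
    have := congrFun h ⟨0, hN⟩
    simpa using this
  have hdet : L.det = 0 := Matrix.exists_mulVec_eq_zero_iff.mp ⟨_, h1ne, hL1⟩
  obtain ⟨v, hv0, hvL⟩ : ∃ v ≠ 0, Lᵀ *ᵥ v = 0 :=
    Matrix.exists_mulVec_eq_zero_iff.mpr (by rw [Matrix.det_transpose]; exact hdet)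
  -- entrywise formula for Lᵀ *ᵥ u
  have hentry : ∀ (u : Fin N → ℝ) (j : Fin N),
      (Lᵀ *ᵥ u) j = (∑ k, a j k) * u j - ∑ i, a i j * u i := by
    intro u j
    simp only [mulVec, dotProduct, transpose_apply]
    have h1 : ∀ i, L i j * u i
        = (if i = j then ((∑ k, a i k) * u i + a i j * u i) else 0) - a i j * u i := by
      intro i
      by_cases hij : i = j
      · subst hij
        rw [hL, if_pos rfl, if_pos rfl]
        ring
      · rw [hL, if_neg hij, if_neg hij]
        ring
    rw [Finset.sum_congr rfl fun i _ => h1 i, Finset.sum_sub_distrib,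
      Finset.sum_ite_eq' Finset.univ j
        (fun i => (∑ k, a i k) * u i + a i j * u i)]
    simp [haii]
  -- w = |v| is a positive left null vector of L
  set w : Fin N → ℝ := fun i => |v i| with hw
  have hwnn : ∀ i, 0 ≤ w i := fun i => abs_nonneg _
  have hdeg : ∀ j, 0 ≤ ∑ k, a j k := fun j => Finset.sum_nonneg fun k _ => ha j k
  have hwL : Lᵀ *ᵥ w = 0 := by
    have hle : ∀ j, (Lᵀ *ᵥ w) j ≤ 0 := by
      intro j
      rw [hentry]
      have h2 : (∑ k, a j k) * w j = |(∑ k, a j k) * v j| := by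
        rw [abs_mul, abs_of_nonneg (hdeg j)]
      have h3 : (∑ k, a j k) * v j = ∑ i, a i j * v i := by
        have := hentry v j
        rw [hvL] at this
        simp only [Pi.zero_apply] at this
        linarith [this]
      have h4 : |∑ i, a i j * v i| ≤ ∑ i, a i j * w i := by
        refine (Finset.abs_sum_le_sum_abs _ _).trans ?_
        refine Finset.sum_le_sum fun i _ => ?_
        rw [abs_mul, abs_of_nonneg (ha i j)]
      rw [h2, h3]
      linarith
    have hsum : ∑ j, (Lᵀ *ᵥ w) j = 0 := by
      simp only [mulVec, dotProduct, transpose_apply]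
      rw [Finset.sum_comm]
      have : ∀ i, ∑ j, L i j * w i = 0 := by
        intro i
        rw [← Finset.sum_mul, hrow, zero_mul]
      simp only [this, Finset.sum_const_zero]
    funext j
    exact aux_all_zero hle hsum j
  have hwpos : ∀ i, 0 < w i := by
    obtain ⟨q, hq⟩ := Function.ne_iff.mp hv0
    have hwq : 0 < w q := abs_pos.mpr hq
    intro i
    rcases lt_or_eq_of_le (hwnn i) with h | h
    · exact h
    -- w i = 0 propagates to w q = 0 along a path from i to q
    exfalso
    have hstep : ∀ p r, 0 < a p r → w r = 0 → w p = 0 := by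
      intro p r hpr hr0
      have he := hentry w r
      rw [hwL] at he
      simp only [Pi.zero_apply] at he
      have hsum0 : ∑ i', a i' r * w i' = 0 := by
        rw [hr0] at he; linarith [he]
      have := (Finset.sum_eq_zero_iff_of_nonneg
        (fun i' _ => mul_nonneg (ha i' r) (hwnn i'))).mp hsum0 p (Finset.mem_univ p)
      rcases mul_eq_zero.mp this with h' | h'
      · exact absurd h' (ne_of_gt hpr)
      · exact h'
    exact absurd (aux_propagate (fun p => w p = 0) hstep (hsc q i) h.symm)
      (ne_of_gt hwq)
  -- set up the symmetric weights and matrix Q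
  set c : Fin N → Fin N → ℝ := fun i j => w i * a i j + w j * a j i with hc
  have hcsym : ∀ i j, c i j = c j i := by intro i j; simp only [hc]; ring
  have hcnn : ∀ i j, 0 ≤ c i j :=
    fun i j => add_nonneg (mul_nonneg (hwnn i) (ha i j))
      (mul_nonneg (hwnn j) (ha j i))
  set Q : Matrix (Fin N) (Fin N) ℝ := diagonal w * L + Lᵀ * diagonal w with hQ
  have hwcol : ∀ j, (∑ k, a j k) * w j = ∑ i, a i j * w i := by
    intro j
    have := hentry w j
    rw [hwL] at this
    simp only [Pi.zero_apply] at this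
    linarith [this]
  have hQentry : ∀ i j, Q i j = (if i = j then ∑ k, c i k else 0) - c i j := by
    intro i j
    have hQij : Q i j = w i * L i j + L j i * w j := by
      rw [hQ, Matrix.add_apply, Matrix.diagonal_mul, Matrix.mul_diagonal,
        Matrix.transpose_apply]
    have hsum : ∀ i, ∑ k, c i k = (∑ k, a i k) * w i + ∑ k, a k i * w k := by
      intro i
      simp only [hc]
      rw [Finset.sum_add_distrib, Finset.sum_mul]
      congr 1
      · exact Finset.sum_congr rfl fun k _ => by ring
      · exact Finset.sum_congr rfl fun k _ => by ring
    by_cases hij : i = j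
    · subst hij
      rw [hQij, hL i i, if_pos rfl, if_pos rfl, hsum i, ← hwcol i]
      simp only [hc, haii]
      ring
    · rw [hQij, hL i j, hL j i, if_neg hij, if_neg (fun h => hij h.symm), if_neg hij]
      simp only [hc]
      ring
  have hquad : ∀ x : Fin N → ℝ,
      2 * (x ⬝ᵥ (Q *ᵥ x)) = ∑ i, ∑ j, c i j * (x i - x j) ^ 2 :=
    fun x => aux_lap_quad hQentry hcsym x
  have hQnn : ∀ x : Fin N → ℝ, 0 ≤ x ⬝ᵥ (Q *ᵥ x) := by
    intro x
    have h1 := hquad x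
    have h2 : 0 ≤ ∑ i, ∑ j, c i j * (x i - x j) ^ 2 :=
      Finset.sum_nonneg fun i _ => Finset.sum_nonneg fun j _ =>
        mul_nonneg (hcnn i j) (sq_nonneg _)
    linarith
  -- if the quadratic form vanishes, x is constant
  have hQzero : ∀ x : Fin N → ℝ, x ⬝ᵥ (Q *ᵥ x) = 0 → ∀ p q, x p = x q := by
    intro x hx p q
    have h1 : ∑ i, ∑ j, c i j * (x i - x j) ^ 2 = 0 := by
      rw [← hquad x, hx, mul_zero]
    have h2 : ∀ i j, c i j * (x i - x j) ^ 2 = 0 := by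
      intro i j
      have hinner := (Finset.sum_eq_zero_iff_of_nonneg
        (fun i' _ => Finset.sum_nonneg fun j' _ =>
          mul_nonneg (hcnn i' j') (sq_nonneg _))).mp h1 i (Finset.mem_univ i)
      exact (Finset.sum_eq_zero_iff_of_nonneg
        (fun j' _ => mul_nonneg (hcnn i j') (sq_nonneg _))).mp hinner j
        (Finset.mem_univ j)
    have hstep : ∀ i j, 0 < a i j → x j = x q → x i = x q := by
      intro i j hij hjq
      have hcpos : 0 < c i j :=
        lt_of_lt_of_le (mul_pos (hwpos i) hij)
          (le_add_of_nonneg_right (mul_nonneg (hwnn j) (ha j i)))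
      have := h2 i j
      rcases mul_eq_zero.mp this with h' | h'
      · exact absurd h' (ne_of_gt hcpos)
      · have : x i - x j = 0 := by
          have := sq_eq_zero_iff.mp h'
          exact this
        linarith [hjq]
    exact aux_propagate (fun i => x i = x q) hstep (hsc p q) rfl
  -- Q annihilates the all-ones vector on both sides
  have hQ1 : Q *ᵥ (fun _ => (1:ℝ)) = 0 := by
    have hd1 : diagonal w *ᵥ (fun _ => (1:ℝ)) = w := by
      funext i; simp [mulVec_diagonal]
    rw [hQ, Matrix.add_mulVec, ← Matrix.mulVec_mulVec, ← Matrix.mulVec_mulVec,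
      hL1, Matrix.mulVec_zero, hd1, hwL, add_zero]
  have hQsym : Qᵀ = Q := by
    ext i j
    rw [transpose_apply, hQentry, hQentry]
    by_cases hij : i = j
    · subst hij; rfl
    · rw [if_neg (fun h => hij h.symm), if_neg hij, hcsym]
  have h1Q : ∀ y : Fin N → ℝ, (fun _ => (1:ℝ)) ⬝ᵥ (Q *ᵥ y) = 0 := by
    intro y
    rw [Matrix.dotProduct_mulVec, ← hQsym, Matrix.vecMul_transpose, hQ1,
      zero_dotProduct]
  -- the two quadratic functionals
  set g : (Fin N → ℝ) → ℝ := fun x => x ⬝ᵥ (Q *ᵥ x) with hg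
  set h : (Fin N → ℝ) → ℝ := fun x => (L *ᵥ x) ⬝ᵥ (L *ᵥ x) with hh
  have hhnn : ∀ x, 0 ≤ h x := fun x =>
    Finset.sum_nonneg fun i _ => mul_self_nonneg _
  have hcontg : Continuous g := by
    simp only [hg, dotProduct, mulVec, dotProduct]
    refine continuous_finset_sum _ fun i _ => ?_
    exact (continuous_apply i).mul
      (continuous_finset_sum _ fun j _ => continuous_const.mul (continuous_apply j))
  have hconth : Continuous h := by
    simp only [hh, dotProduct, mulVec, dotProduct]
    refine continuous_finset_sum _ fun i _ => ?_
    exact (continuous_finset_sum _ fun j _ => continuous_const.mul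
      (continuous_apply j)).mul
      (continuous_finset_sum _ fun j _ => continuous_const.mul (continuous_apply j))
  set K : Set (Fin N → ℝ) := Metric.sphere 0 1 ∩ {x | ∑ i, x i = 0} with hK
  have hKc : IsCompact K :=
    (isCompact_sphere 0 1).inter_right
      (isClosed_eq (continuous_finset_sum _ fun i _ => continuous_apply i)
        continuous_const)
  -- key bound on K
  have key : ∃ γ : ℝ, 0 < γ ∧ ∀ u ∈ K, 3 * γ * h u ≤ g u := by
    rcases K.eq_empty_or_nonempty with hKe | hKne
    · exact ⟨1, one_pos, fun u hu => absurd hu (by rw [hKe]; exact Set.notMem_empty u)⟩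
    obtain ⟨z, hzK, hz⟩ := hKc.exists_isMinOn hKne hcontg.continuousOn
    obtain ⟨z', hz'K, hz'⟩ := hKc.exists_isMaxOn hKne hconth.continuousOn
    set m := g z with hm
    set M := h z' with hM
    have hmpos : 0 < m := by
      rcases lt_or_eq_of_le (hQnn z) with h' | h'
      · exact h'
      exfalso
      have hzc := hQzero z h'.symm
      have hzero : ∀ i, z i = 0 := by
        intro i
        have hsum : ∑ j, z j = 0 := hzK.2
        have : ∑ j, z j = (N : ℝ) * z i := by
          rw [Finset.sum_congr rfl fun j _ => hzc j i]
          simp [Finset.card_univ, mul_comm]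
        have hNne : (N : ℝ) ≠ 0 := Nat.cast_ne_zero.mpr hN.ne'
        have := this ▸ hsum
        exact (mul_eq_zero.mp this).resolve_left hNne
      have hz1 : ‖z‖ = 1 := by
        have := hzK.1
        rwa [mem_sphere_zero_iff_norm] at this
      have : z = 0 := funext hzero
      rw [this, norm_zero] at hz1
      exact zero_ne_one hz1
    have hMnn : 0 ≤ M := hhnn z'
    refine ⟨m / (3 * (M + 1)), div_pos hmpos (by linarith), fun u hu => ?_⟩
    have hγ3 : 3 * (m / (3 * (M + 1))) * (M + 1) = m := by
      field_simp
    have huh : h u ≤ M := hz' hu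
    have hug : m ≤ g u := hz hu
    have hγnn : 0 ≤ 3 * (m / (3 * (M + 1))) := by positivity
    calc 3 * (m / (3 * (M + 1))) * h u
        ≤ 3 * (m / (3 * (M + 1))) * (M + 1) := by
          exact mul_le_mul_of_nonneg_left (by linarith) hγnn
      _ = m := hγ3
      _ ≤ g u := hug
  obtain ⟨γ, hγpos, hγK⟩ := key
  -- extend the bound to all of space
  have main : ∀ x : Fin N → ℝ, 3 * γ * h x ≤ g x := by
    intro x
    set t : ℝ := (∑ i, x i) / N with ht
    set y : Fin N → ℝ := fun i => x i - t with hy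
    have hysum : ∑ i, y i = 0 := by
      simp only [hy]
      rw [Finset.sum_sub_distrib, Finset.sum_const, Finset.card_univ, Fintype.card_fin,
        ht, nsmul_eq_mul]
      field_simp
      ring
    have hxy : x = y + t • (fun _ => (1:ℝ)) := by
      funext i; simp [hy]
    have hLxy : L *ᵥ x = L *ᵥ y := by
      rw [hxy, Matrix.mulVec_add, Matrix.mulVec_smul, hL1, smul_zero, add_zero]
    have hQxy : Q *ᵥ x = Q *ᵥ y := by
      rw [hxy, Matrix.mulVec_add, Matrix.mulVec_smul, hQ1, smul_zero, add_zero]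
    have hgxy : g x = g y := by
      simp only [hg]
      rw [hQxy, hxy, add_dotProduct, smul_dotProduct, h1Q, smul_zero,
        add_zero]
    have hhxy : h x = h y := by simp only [hh, hLxy]
    rw [hgxy, hhxy]
    rcases eq_or_ne y 0 with hy0 | hy0
    · simp only [hg, hh, hy0, Matrix.mulVec_zero, dotProduct_zero,
        zero_dotProduct]
      norm_num
    have hyn : 0 < ‖y‖ := norm_pos_iff.mpr hy0
    set u : Fin N → ℝ := ‖y‖⁻¹ • y with hu
    have huK : u ∈ K := by
      constructor
      · rw [mem_sphere_zero_iff_norm, hu, norm_smul, norm_inv, norm_norm]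
        field_simp
      · show ∑ i, u i = 0
        simp only [hu, Pi.smul_apply, smul_eq_mul]
        rw [← Finset.mul_sum, hysum, mul_zero]
    have hyu : y = ‖y‖ • u := by
      rw [hu, smul_smul, mul_inv_cancel₀ (ne_of_gt hyn), one_smul]
    have hscaleg : ∀ (s : ℝ) (z : Fin N → ℝ), g (s • z) = s ^ 2 * g z := by
      intro s z
      simp only [hg]
      rw [Matrix.mulVec_smul, smul_dotProduct, dotProduct_smul]
      simp only [smul_eq_mul]; ring
    have hscaleh : ∀ (s : ℝ) (z : Fin N → ℝ), h (s • z) = s ^ 2 * h z := by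
      intro s z
      simp only [hh]
      rw [Matrix.mulVec_smul, smul_dotProduct, dotProduct_smul]
      simp only [smul_eq_mul]; ring
    have hgscale : g y = ‖y‖ ^ 2 * g u := by
      conv_lhs => rw [hyu]
      rw [hscaleg]
    have hhscale : h y = ‖y‖ ^ 2 * h u := by
      conv_lhs => rw [hyu]
      rw [hscaleh]
    rw [hgscale, hhscale]
    have := hγK u huK
    nlinarith [sq_nonneg ‖y‖]
  -- assemble the result
  refine ⟨w, γ, hwpos, hγpos, posSemidef_iff_dotProduct_mulVec.mpr ⟨?_, ?_⟩⟩
  · -- Hermitian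
    show (Q - (3 * γ) • (Lᵀ * L))ᴴ = Q - (3 * γ) • (Lᵀ * L)
    rw [conjTranspose_eq_transpose_of_trivial, Matrix.transpose_sub,
      Matrix.transpose_smul, Matrix.transpose_mul, Matrix.transpose_transpose, hQsym]
  · intro x
    have hx : star x = x := by
      funext i; simp
    rw [hx]
    have hexp : (Q - (3 * γ) • (Lᵀ * L)) *ᵥ x
        = Q *ᵥ x - (3 * γ) • ((Lᵀ * L) *ᵥ x) := by
      rw [Matrix.sub_mulVec, Matrix.smul_mulVec]
    rw [hexp, dotProduct_sub, dotProduct_smul]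
    have hLL : x ⬝ᵥ ((Lᵀ * L) *ᵥ x) = h x := by
      rw [← Matrix.mulVec_mulVec, Matrix.dotProduct_mulVec, Matrix.vecMul_transpose]
    rw [hLL]
    have := main x
    simp only [smul_eq_mul]
    have hgx : x ⬝ᵥ (Q *ᵥ x) = g x := rfl
    rw [hgx]
    linarith
end

section
/- Let L ∈ ℝ^{N×N} be the Laplacian matrix of a strongly connected weighted directed graph, and let α ∈ ℝ^N have all entries positive and satisfy αᵀL = 0. With H = diag(α_1,…,α_N), the symmetric matrix HL + LᵀH is positive semidefinite and its kernel is exactly the span of the all-ones vector 𝟙 (equivalently, HL + LᵀH has rank N − 1). -/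
open Matrix

/-- Let `L` be the Laplacian of a strongly connected weighted directed graph and
`α` a positive left null vector of `L`. With `H = diag(α)`, the symmetric
matrix `HL + LᵀH` is positive semidefinite and its kernel is exactly the span
of the all-ones vector. -/
theorem laplacian_symmetrized_psd_kernel
    {N : ℕ} (a : Fin N → Fin N → ℝ)
    (ha : ∀ i j, 0 ≤ a i j) (haii : ∀ i, a i i = 0)
    (L : Matrix (Fin N) (Fin N) ℝ)
    (hL : ∀ i j, L i j = if i = j then ∑ k, a i k else -(a i j))
    (hsc : ∀ p q : Fin N, Relation.ReflTransGen (fun j i => 0 < a i j) q p)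
    (α : Fin N → ℝ) (hα : ∀ i, 0 < α i)
    (hαL : α ᵥ* L = 0) :
    (Matrix.diagonal α * L + Lᵀ * Matrix.diagonal α).PosSemidef ∧
      ∀ v : Fin N → ℝ,
        (Matrix.diagonal α * L + Lᵀ * Matrix.diagonal α) *ᵥ v = 0 ↔
          ∃ c : ℝ, ∀ i, v i = c := by
  set M := Matrix.diagonal α * L + Lᵀ * Matrix.diagonal α with hM
  -- Entry formula for L without `if`
  have hL' : ∀ i j, L i j = (if i = j then ∑ k, a i k else 0) - a i j := by
    intro i j
    rw [hL]
    by_cases h : i = j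
    · subst h; simp [haii]
    · simp [h]
  -- Entry formula for M
  have hMe : ∀ i j, M i j = α i * L i j + L j i * α j := by
    intro i j
    simp [hM, Matrix.add_apply, Matrix.diagonal_mul, Matrix.mul_diagonal,
      Matrix.transpose_apply]
  -- balance condition : column sums of b equal row sums
  have hbal : ∀ j, ∑ i, α i * a i j = α j * ∑ k, a j k := by
    intro j
    have h0 : (α ᵥ* L) j = 0 := by rw [hαL]; rfl
    simp only [Matrix.vecMul, dotProduct, hL', mul_sub] at h0
    rw [Finset.sum_sub_distrib] at h0
    have h1 : ∑ i, α i * (if i = j then ∑ k, a i k else 0) = α j * ∑ k, a j k := by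
      simp
    rw [h1] at h0
    linarith
  -- inner sum formula
  have hinner : ∀ (v : Fin N → ℝ) i, ∑ j, L i j * v j
      = (∑ k, a i k) * v i - ∑ j, a i j * v j := by
    intro v i
    simp only [hL', sub_mul, ite_mul, zero_mul]
    rw [Finset.sum_sub_distrib]
    simp
  -- double sum helpers
  have dadd : ∀ (f g : Fin N → Fin N → ℝ),
      ∑ i, ∑ j, (f i j + g i j) = (∑ i, ∑ j, f i j) + ∑ i, ∑ j, g i j := by
    intro f g
    rw [← Finset.sum_add_distrib]
    exact Finset.sum_congr rfl fun i _ => Finset.sum_add_distrib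
  have dsub : ∀ (f g : Fin N → Fin N → ℝ),
      ∑ i, ∑ j, (f i j - g i j) = (∑ i, ∑ j, f i j) - ∑ i, ∑ j, g i j := by
    intro f g
    rw [← Finset.sum_sub_distrib]
    exact Finset.sum_congr rfl fun i _ => Finset.sum_sub_distrib _ _
  have dmul : ∀ (r : ℝ) (f : Fin N → Fin N → ℝ),
      r * (∑ i, ∑ j, f i j) = ∑ i, ∑ j, r * f i j := by
    intro r f
    rw [Finset.mul_sum]
    exact Finset.sum_congr rfl fun i _ => Finset.mul_sum _ _ _
  -- swap lemma for squares
  have hsq : ∀ v : Fin N → ℝ,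
      ∑ i, ∑ j, α i * a i j * v j ^ 2 = ∑ i, ∑ j, α i * a i j * v i ^ 2 := by
    intro v
    rw [Finset.sum_comm]
    refine Finset.sum_congr rfl fun j _ => ?_
    rw [← Finset.sum_mul, hbal j, mul_assoc, Finset.sum_mul, Finset.mul_sum]
    exact Finset.sum_congr rfl fun k _ => by ring
  -- the quadratic form
  have quad : ∀ v : Fin N → ℝ,
      v ⬝ᵥ (M *ᵥ v) = ∑ i, ∑ j, α i * a i j * (v i - v j) ^ 2 := by
    intro v
    have e1 : v ⬝ᵥ (M *ᵥ v)
        = ∑ i, ∑ j, (α i * v i * (L i j * v j) + v i * (L j i * (α j * v j))) := by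
      simp only [dotProduct, Matrix.mulVec, dotProduct, hMe,
        Finset.mul_sum]
      exact Finset.sum_congr rfl fun i _ => Finset.sum_congr rfl fun j _ => by ring
    have e2 : ∑ i, ∑ j, v i * (L j i * (α j * v j))
        = ∑ i, ∑ j, α i * v i * (L i j * v j) := by
      rw [Finset.sum_comm]
      exact Finset.sum_congr rfl fun i _ => Finset.sum_congr rfl fun j _ => by ring
    have lhs : v ⬝ᵥ (M *ᵥ v) = 2 * ∑ i, ∑ j, α i * v i * (L i j * v j) := by
      rw [e1, dadd, e2]; ring
    have hA : ∑ i, ∑ j, α i * v i * (L i j * v j)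
        = (∑ i, ∑ j, α i * a i j * v i ^ 2)
          - ∑ i, ∑ j, α i * a i j * (v i * v j) := by
      rw [← dsub]
      refine Finset.sum_congr rfl fun i _ => ?_
      rw [← Finset.mul_sum, hinner v i, mul_sub, Finset.sum_mul, Finset.mul_sum,
        Finset.mul_sum, ← Finset.sum_sub_distrib]
      exact Finset.sum_congr rfl fun j _ => by ring
    have rhs : ∑ i, ∑ j, α i * a i j * (v i - v j) ^ 2
        = 2 * ((∑ i, ∑ j, α i * a i j * v i ^ 2)
            - ∑ i, ∑ j, α i * a i j * (v i * v j)) := by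
      have expand : ∀ i j, α i * a i j * (v i - v j) ^ 2
          = (α i * a i j * v i ^ 2 - 2 * (α i * a i j * (v i * v j)))
            + α i * a i j * v j ^ 2 := fun i j => by ring
      calc ∑ i, ∑ j, α i * a i j * (v i - v j) ^ 2
          = ∑ i, ∑ j, ((α i * a i j * v i ^ 2 - 2 * (α i * a i j * (v i * v j)))
              + α i * a i j * v j ^ 2) :=
            Finset.sum_congr rfl fun i _ => Finset.sum_congr rfl fun j _ => expand i j
        _ = ((∑ i, ∑ j, α i * a i j * v i ^ 2)
              - ∑ i, ∑ j, 2 * (α i * a i j * (v i * v j)))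
            + ∑ i, ∑ j, α i * a i j * v j ^ 2 := by rw [dadd, dsub]
        _ = 2 * ((∑ i, ∑ j, α i * a i j * v i ^ 2)
              - ∑ i, ∑ j, α i * a i j * (v i * v j)) := by
            rw [hsq v, ← dmul]; ring
    rw [lhs, hA, rhs]
  -- Hermitian
  have hHerm : M.IsHermitian := by
    ext i j
    simp only [Matrix.conjTranspose_apply, star_trivial, hMe]
    ring
  -- nonnegativity of quadratic form
  have hquad_nonneg : ∀ v : Fin N → ℝ, 0 ≤ v ⬝ᵥ (M *ᵥ v) := by
    intro v
    rw [quad]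
    refine Finset.sum_nonneg fun i _ => Finset.sum_nonneg fun j _ => ?_
    exact mul_nonneg (mul_nonneg (hα i).le (ha i j)) (sq_nonneg _)
  refine ⟨Matrix.PosSemidef.of_dotProduct_mulVec_nonneg hHerm fun v => by simpa using hquad_nonneg v, fun v => ?_⟩
  constructor
  · intro hMv
    -- quadratic form vanishes
    have h0 : ∑ i, ∑ j, α i * a i j * (v i - v j) ^ 2 = 0 := by
      rw [← quad, hMv, dotProduct_zero]
    have hterm : ∀ i j, α i * a i j * (v i - v j) ^ 2 = 0 := by
      have h1 := (Finset.sum_eq_zero_iff_of_nonneg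
        (fun i _ => Finset.sum_nonneg fun j _ =>
          mul_nonneg (mul_nonneg (hα i).le (ha i j)) (sq_nonneg _))).mp h0
      intro i j
      have h2 := (Finset.sum_eq_zero_iff_of_nonneg
        (fun j _ => mul_nonneg (mul_nonneg (hα i).le (ha i j)) (sq_nonneg _))).mp
        (h1 i (Finset.mem_univ i))
      exact h2 j (Finset.mem_univ j)
    have hedge : ∀ i j, 0 < a i j → v i = v j := by
      intro i j hij
      have := hterm i j
      have hb : 0 < α i * a i j := mul_pos (hα i) hij
      have : (v i - v j) ^ 2 = 0 := by
        rcases mul_eq_zero.mp this with h | h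
        · exact absurd h hb.ne'
        · exact h
      have := pow_eq_zero_iff (n := 2) (by norm_num) |>.mp this
      linarith [sub_eq_zero.mp this]
    rcases isEmpty_or_nonempty (Fin N) with hE | hE
    · exact ⟨0, fun i => (hE.false i).elim⟩
    · obtain ⟨q⟩ := hE
      refine ⟨v q, fun p => ?_⟩
      induction hsc p q with
      | refl => rfl
      | tail _ hbc ih => exact (hedge _ _ hbc).trans ih
  · rintro ⟨c, hc⟩
    -- L v = 0 since v is constant
    have hLv : L *ᵥ v = 0 := by
      ext i
      simp only [Matrix.mulVec, dotProduct, Pi.zero_apply]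
      rw [hinner v i]
      simp only [hc]
      rw [Finset.sum_mul]
      exact sub_self _
    -- diagonal α *ᵥ v = c • α
    have hdv : Matrix.diagonal α *ᵥ v = c • α := by
      ext i
      simp [Matrix.mulVec_diagonal, hc i, mul_comm]
    have hLtα : Lᵀ *ᵥ α = 0 := by
      rw [Matrix.mulVec_transpose, hαL]
    rw [hM, Matrix.add_mulVec, ← Matrix.mulVec_mulVec, ← Matrix.mulVec_mulVec,
      hLv, hdv, Matrix.mulVec_smul, hLtα]
    simp
end

section
/- Fix positive reals α_1,…,α_N. For positive reals ρ_1,…,ρ_N define Q_ρ = R⁻¹(HR − μ hhᵀ)R⁻¹, where R = diag(ρ_1,…,ρ_N), H = diag(α_1,…,α_N), h = (α_1,…,α_N)ᵀ, and μ = (Σ_{i=1}^N α_i/ρ_i)⁻¹. Then the quadratic form z ↦ zᵀQ_ρ z is nonincreasing in each ρ_i: if 0 < ρ_i ≤ ρ'_i for all i, then zᵀQ_{ρ'} z ≤ zᵀQ_ρ z for every z ∈ ℝ^N, i.e., Q_ρ − Q_{ρ'} is positive semidefinite. (Appendix Lemma on monotonicity of the Lyapunov function in ρ.) -/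
open Matrix

/-- `Q_ρ = R⁻¹ (H R − μ h hᵀ) R⁻¹` with `R = diag(ρ)`, `H = diag(α)`,
`h = α` and `μ = (∑ i, α i / ρ i)⁻¹`. -/
noncomputable def Qrho {N : ℕ} (α ρ : Fin N → ℝ) : Matrix (Fin N) (Fin N) ℝ :=
  Matrix.diagonal (fun i => (ρ i)⁻¹) *
    (Matrix.diagonal α * Matrix.diagonal ρ
      - (∑ i, α i / ρ i)⁻¹ • Matrix.vecMulVec α α) *
    Matrix.diagonal (fun i => (ρ i)⁻¹)

lemma Qrho_apply {N : ℕ} (α ρ : Fin N → ℝ) (i j : Fin N) :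
    Qrho α ρ i j = (ρ i)⁻¹ * ((if i = j then α i * ρ i else 0)
      - (∑ k, α k / ρ k)⁻¹ * (α i * α j)) * (ρ j)⁻¹ := by
  simp [Qrho, Matrix.mul_diagonal, Matrix.diagonal_mul, Matrix.sub_apply,
    Matrix.smul_apply, Matrix.vecMulVec_apply, Matrix.diagonal_apply, mul_comm]

lemma quadform {N : ℕ} (α ρ x : Fin N → ℝ) (hρ : ∀ i, 0 < ρ i) :
    x ⬝ᵥ (Qrho α ρ *ᵥ x)
      = ∑ i, α i * (x i)^2 / ρ i
        - (∑ i, α i / ρ i)⁻¹ * (∑ i, α i * x i / ρ i)^2 := by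
  have key : ∀ i, (Qrho α ρ *ᵥ x) i
      = α i * x i / ρ i
        - (∑ k, α k / ρ k)⁻¹ * (α i / ρ i) * (∑ j, α j * x j / ρ j) := by
    intro i
    have : ∀ j, Qrho α ρ i j * x j
        = (if j = i then α i * x i / ρ i else 0)
          - (∑ k, α k / ρ k)⁻¹ * (α i / ρ i) * (α j * x j / ρ j) := by
      intro j
      rw [Qrho_apply]
      generalize (∑ k, α k / ρ k)⁻¹ = μ
      rcases eq_or_ne j i with h | h
      · subst h
        simp only [if_pos rfl, ↓reduceIte]
        have h0 : ρ j ≠ 0 := (hρ j).ne'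
        field_simp
      · rw [if_neg (Ne.symm h), if_neg h]
        field_simp
        ring
    simp only [mulVec, dotProduct, this, Finset.sum_sub_distrib,
      Finset.sum_ite_eq', Finset.mem_univ, if_pos, ← Finset.mul_sum]
  simp only [dotProduct, key, mul_sub, Finset.sum_sub_distrib]
  congr 1
  · exact Finset.sum_congr rfl fun i _ => by ring
  · rw [pow_two, Finset.sum_mul]
    rw [Finset.sum_congr rfl (fun i (_ : i ∈ Finset.univ) => (by ring :
      x i * ((∑ k, α k / ρ k)⁻¹ * (α i / ρ i) * (∑ j, α j * x j / ρ j))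
      = (∑ k, α k / ρ k)⁻¹ * ((α i * x i / ρ i) * (∑ j, α j * x j / ρ j)))),
      ← Finset.mul_sum, ← Finset.sum_mul]

lemma expand_sq {N : ℕ} (α ρ x : Fin N → ℝ) (c : ℝ) :
    ∑ i, α i * (x i - c)^2 / ρ i
      = ∑ i, α i * (x i)^2 / ρ i - 2*c*(∑ i, α i * x i / ρ i)
        + c^2 * (∑ i, α i / ρ i) := by
  rw [Finset.mul_sum, Finset.mul_sum, ← Finset.sum_sub_distrib,
    ← Finset.sum_add_distrib]
  exact Finset.sum_congr rfl fun i _ => by ring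

lemma g_mono {N : ℕ} (α : Fin N → ℝ) (hα : ∀ i, 0 < α i)
    (ρ ρ' : Fin N → ℝ) (hρ : ∀ i, 0 < ρ i) (hle : ∀ i, ρ i ≤ ρ' i) (x : Fin N → ℝ) :
    ∑ i, α i * (x i)^2 / ρ' i - (∑ i, α i / ρ' i)⁻¹ * (∑ i, α i * x i / ρ' i)^2
      ≤ ∑ i, α i * (x i)^2 / ρ i - (∑ i, α i / ρ i)⁻¹ * (∑ i, α i * x i / ρ i)^2 := by
  rcases isEmpty_or_nonempty (Fin N) with hN | hN
  · simp
  have hρ' : ∀ i, 0 < ρ' i := fun i => lt_of_lt_of_le (hρ i) (hle i)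
  have hS : 0 < ∑ i, α i / ρ i :=
    Finset.sum_pos (fun i _ => div_pos (hα i) (hρ i)) Finset.univ_nonempty
  have hS' : 0 < ∑ i, α i / ρ' i :=
    Finset.sum_pos (fun i _ => div_pos (hα i) (hρ' i)) Finset.univ_nonempty
  set S := ∑ i, α i / ρ i with hSdef
  set S' := ∑ i, α i / ρ' i with hS'def
  set T := ∑ i, α i * x i / ρ i with hTdef
  set T' := ∑ i, α i * x i / ρ' i with hT'def
  set c := S⁻¹ * T with hcdef
  have h1 : ∑ i, α i * (x i)^2 / ρ i - S⁻¹ * T^2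
      = ∑ i, α i * (x i - c)^2 / ρ i := by
    rw [expand_sq, ← hSdef, ← hTdef]
    have : S⁻¹ * T^2 = 2*c*T - c^2*S := by
      rw [hcdef]; field_simp; ring
    linarith
  have h2 : ∑ i, α i * (x i)^2 / ρ' i - S'⁻¹ * T'^2
      ≤ ∑ i, α i * (x i - c)^2 / ρ' i := by
    rw [expand_sq, ← hS'def, ← hT'def]
    have key : S'⁻¹ * T'^2 - (2*c*T' - c^2*S') = (T' - c*S')^2 / S' := by
      field_simp; ring
    have h0 : 0 ≤ (T' - c*S')^2 / S' := by positivity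
    linarith
  have h3 : ∑ i, α i * (x i - c)^2 / ρ' i ≤ ∑ i, α i * (x i - c)^2 / ρ i := by
    apply Finset.sum_le_sum
    intro i _
    exact div_le_div_of_nonneg_left (mul_nonneg (hα i).le (sq_nonneg _)) (hρ i) (hle i)
  linarith

lemma Qrho_isHermitian {N : ℕ} (α ρ : Fin N → ℝ) : (Qrho α ρ).IsHermitian := by
  ext i j
  simp only [conjTranspose_apply, Qrho_apply, star_trivial]
  rcases eq_or_ne i j with h | h
  · subst h; ring
  · rw [if_neg h, if_neg (Ne.symm h)]; ring


/-- **Appendix Lemma (monotonicity of the Lyapunov function in ρ).** For fixed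
positive `α₁,…,α_N`, the quadratic form `z ↦ zᵀ Q_ρ z` is nonincreasing in each
`ρᵢ`: if `0 < ρᵢ ≤ ρ'ᵢ` for all `i`, then `Q_ρ − Q_{ρ'}` is positive
semidefinite. -/
theorem Qrho_monotone
    {N : ℕ} (α : Fin N → ℝ) (hα : ∀ i, 0 < α i)
    (ρ ρ' : Fin N → ℝ) (hρ : ∀ i, 0 < ρ i) (hle : ∀ i, ρ i ≤ ρ' i) :
    (Qrho α ρ - Qrho α ρ').PosSemidef := by
  have hρ' : ∀ i, 0 < ρ' i := fun i => lt_of_lt_of_le (hρ i) (hle i)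
  rw [posSemidef_iff_dotProduct_mulVec]
  constructor
  · exact (Qrho_isHermitian α ρ).sub (Qrho_isHermitian α ρ')
  · intro x
    have hmono := g_mono α hα ρ ρ' hρ hle x
    have hx : star x = x := star_trivial x
    rw [hx, sub_mulVec, dotProduct_sub, quadform α ρ x hρ, quadform α ρ' x hρ']
    linarith
end

section
/- Let V : [0,∞) → ℝ be differentiable with V(t) ≥ 0 for all t ≥ 0, let η > 0, and let g : [0,∞) → ℝ be nonnegative and integrable on [0,∞) (∫₀^∞ g(t) dt < ∞). If V'(t) ≤ −ηV(t) + g(t) for all t ≥ 0, then V(t) → 0 as t → ∞. (Comparison lemma used to conclude ζ_i → 0 from L² signals in the proof of Lemma 3.) -/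
open Filter

lemma comparison_key
    (V g : ℝ → ℝ) (η : ℝ) (hη : 0 < η)
    (hVdiff : ∀ t, 0 ≤ t → DifferentiableAt ℝ V t)
    (hgpos : ∀ t, 0 ≤ t → 0 ≤ g t)
    (hgint : MeasureTheory.IntegrableOn g (Set.Ici 0))
    (hineq : ∀ t, 0 ≤ t → deriv V t ≤ -η * V t + g t)
    (a t : ℝ) (ha : 0 ≤ a) (hat : a ≤ t) :
    V t ≤ Real.exp (-η * (t - a)) * V a + ∫ s in a..t, g s := by
  set W : ℝ → ℝ := fun s => Real.exp (η * s) * V s with hW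
  set φ : ℝ → ℝ := fun s => Real.exp (η * s) * g s with hφ
  have hsub : Set.Icc a t ⊆ Set.Ici (0 : ℝ) := fun x hx => le_trans ha hx.1
  have huIcc : Set.uIcc a t = Set.Icc a t := Set.uIcc_of_le hat
  have hgIcc : MeasureTheory.IntegrableOn g (Set.Icc a t) := hgint.mono_set hsub
  have hφint : MeasureTheory.IntegrableOn φ (Set.Icc a t) := by
    refine MeasureTheory.Integrable.bdd_mul (c := Real.exp (η * t)) hgIcc
      ((Real.continuous_exp.comp (continuous_const.mul continuous_id)).aestronglyMeasurable) ?_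
    refine Filter.eventually_of_mem (MeasureTheory.self_mem_ae_restrict measurableSet_Icc) ?_
    intro x hx
    rw [Real.norm_eq_abs, abs_of_pos (Real.exp_pos _)]
    exact Real.exp_le_exp.2 (mul_le_mul_of_nonneg_left hx.2 hη.le)
  have hcont : ContinuousOn W (Set.Icc a t) := by
    intro x hx
    exact (((Real.continuous_exp.comp (continuous_const.mul continuous_id)).continuousAt).mul
      (hVdiff x (hsub hx)).continuousAt).continuousWithinAt
  have hderiv : ∀ x ∈ Set.Ioo a t,
      HasDerivWithinAt W (η * Real.exp (η * x) * V x + Real.exp (η * x) * deriv V x)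
        (Set.Ioi x) x := by
    intro x hx
    have h1 : HasDerivAt (fun s => Real.exp (η * s)) (η * Real.exp (η * x)) x := by
      simpa [mul_comm, Function.comp_def] using (Real.hasDerivAt_exp (η * x)).comp x
        ((hasDerivAt_id x).const_mul η)
    have h2 : HasDerivAt V (deriv V x) x := (hVdiff x (le_trans ha hx.1.le)).hasDerivAt
    exact (h1.mul h2).hasDerivWithinAt
  have hle : ∀ x ∈ Set.Ioo a t,
      η * Real.exp (η * x) * V x + Real.exp (η * x) * deriv V x ≤ φ x := by
    intro x hx
    have hx0 : 0 ≤ x := le_trans ha hx.1.le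
    have h := hineq x hx0
    have hexp : (0:ℝ) ≤ Real.exp (η * x) := (Real.exp_pos _).le
    simp only [hφ]
    nlinarith [mul_le_mul_of_nonneg_left h hexp]
  have key : W t - W a ≤ ∫ s in a..t, φ s :=
    intervalIntegral.sub_le_integral_of_hasDeriv_right_of_le hat hcont hderiv hφint hle
  have hmono : (∫ s in a..t, φ s) ≤ ∫ s in a..t, Real.exp (η * t) * g s := by
    apply intervalIntegral.integral_mono_on hat
    · exact (hφint.mono_set (by rw [huIcc])).intervalIntegrable
    · exact (MeasureTheory.IntegrableOn.mono_set (hgIcc.const_mul _)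
        (by rw [huIcc])).intervalIntegrable
    · intro x hx
      have h1 : Real.exp (η * x) ≤ Real.exp (η * t) :=
        Real.exp_le_exp.2 (mul_le_mul_of_nonneg_left hx.2 hη.le)
      exact mul_le_mul_of_nonneg_right h1 (hgpos x (hsub hx))
  rw [intervalIntegral.integral_const_mul] at hmono
  have hid : Real.exp (-η * (t - a)) * Real.exp (η * t) = Real.exp (η * a) := by
    rw [← Real.exp_add]; ring_nf
  have hEt : (0:ℝ) < Real.exp (η * t) := Real.exp_pos _
  have hmain : Real.exp (η * t) * V t ≤
      Real.exp (η * t) * (Real.exp (-η * (t - a)) * V a + ∫ s in a..t, g s) := by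
    have hexpand : Real.exp (η * t) * (Real.exp (-η * (t - a)) * V a + ∫ s in a..t, g s)
        = Real.exp (η * a) * V a + Real.exp (η * t) * ∫ s in a..t, g s := by
      rw [mul_add, ← mul_assoc, mul_comm (Real.exp (η * t)) (Real.exp (-η * (t - a))), hid]
    rw [hexpand]
    have hWt : W t = Real.exp (η * t) * V t := rfl
    have hWa : W a = Real.exp (η * a) * V a := rfl
    linarith [key, hmono]
  exact le_of_mul_le_mul_left hmain hEt

/-- **Comparison lemma** (used to conclude `ζᵢ → 0` from `L²` signals in the
proof of Lemma 3). If `V : [0,∞) → ℝ` is differentiable and nonnegative,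
`η > 0`, `g` is nonnegative and Lebesgue integrable on `[0,∞)`, and
`V'(t) ≤ -η V(t) + g(t)` for all `t ≥ 0`, then `V(t) → 0` as `t → ∞`. -/
theorem comparison_lemma_tendsto_zero
    (V g : ℝ → ℝ) (η : ℝ) (hη : 0 < η)
    (hVpos : ∀ t, 0 ≤ t → 0 ≤ V t)
    (hVdiff : ∀ t, 0 ≤ t → DifferentiableAt ℝ V t)
    (hgpos : ∀ t, 0 ≤ t → 0 ≤ g t)
    (hgint : MeasureTheory.IntegrableOn g (Set.Ici 0))
    (hineq : ∀ t, 0 ≤ t → deriv V t ≤ -η * V t + g t) :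
    Tendsto V atTop (nhds 0) := by
  have hII : ∀ x y : ℝ, 0 ≤ x → x ≤ y → IntervalIntegrable g MeasureTheory.volume x y := by
    intro x y hx hxy
    have hsub : Set.uIcc x y ⊆ Set.Ici 0 := by
      rw [Set.uIcc_of_le hxy]; exact fun z hz => le_trans hx hz.1
    exact (hgint.mono_set hsub).intervalIntegrable
  set G : ℝ → ℝ := fun t => ∫ s in (0:ℝ)..t, g s with hG
  set S : Set ℝ := G '' Set.Ici 0 with hS
  have hSne : S.Nonempty := ⟨G 0, 0, Set.self_mem_Ici, rfl⟩
  have hSbdd : BddAbove S := by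
    refine ⟨∫ s in Set.Ici (0:ℝ), g s, ?_⟩
    rintro _ ⟨x, hx, rfl⟩
    simp only [hG]
    rw [intervalIntegral.integral_of_le hx]
    refine MeasureTheory.setIntegral_mono_set hgint ?_ ?_
    · exact Filter.eventually_of_mem (MeasureTheory.self_mem_ae_restrict measurableSet_Ici)
        (fun z hz => hgpos z hz)
    · exact HasSubset.Subset.eventuallyLE (Set.Ioc_subset_Ioi_self.trans Set.Ioi_subset_Ici_self)
  rw [Metric.tendsto_atTop]
  intro ε hε
  set L := sSup S with hL
  obtain ⟨_, ⟨a, ha0, rfl⟩, hb⟩ := exists_lt_of_lt_csSup hSne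
    (show L - ε/2 < L by linarith)
  have htail : ∀ t, a ≤ t → (∫ s in a..t, g s) < ε/2 := by
    intro t hat
    have hGt : G t ≤ L := le_csSup hSbdd ⟨t, le_trans ha0 hat, rfl⟩
    have hadd := intervalIntegral.integral_add_adjacent_intervals
      (hII 0 a le_rfl ha0) (hII a t ha0 hat)
    have heq : (∫ s in a..t, g s) = G t - G a := by
      simp only [hG]; linarith
    rw [heq]; linarith
  have hlim : Tendsto (fun t => Real.exp (-η * (t - a)) * V a) atTop (nhds 0) := by
    have h1 : Tendsto (fun t : ℝ => -η * (t - a)) atTop atBot := by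
      refine (tendsto_const_mul_atBot_of_neg (by linarith)).2 ?_
      simpa [sub_eq_add_neg] using tendsto_atTop_add_const_right atTop (-a) tendsto_id
    have h2 := (Real.tendsto_exp_atBot.comp h1).mul_const (V a)
    simpa using h2
  have hev := (hlim.eventually_lt_const (half_pos hε)).and
    ((eventually_ge_atTop a).and (eventually_ge_atTop (0:ℝ)))
  obtain ⟨N, hN⟩ := eventually_atTop.1 hev
  refine ⟨N, fun t ht => ?_⟩
  obtain ⟨h1, h2, h3⟩ := hN t ht
  have hkey := comparison_key V g η hη hVdiff hgpos hgint hineq a t ha0 h2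
  have htl := htail t h2
  rw [Real.dist_eq, sub_zero, abs_of_nonneg (hVpos t h3)]
  linarith
end
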